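/- arXiv:0805.1863 — 2 statements merged into one kernel-verified Lean document; each statement's English description precedes it below -/
import Mathlib

section
/- Suppose 𝔼_k(T_0) < ∞ for every k ∈ ℕ, and let μ (the law of Z_∞) be the common limiting distribution of the chain. Then there exists A > 0 such that for all n, k ∈ ℕ: Σ_{l∈ℕ} |ℙ_k(Z_n = l) − μ({l})| ≤ A·[ sup{ |u_l − u_∞| : ⌊n/2⌋ ≤ l ≤ n } + 𝔼_0(T_0·1_{T_0 > n/4}) + 𝔼_k(T_0·1_{T_0 > n/4}) ]. -/
open MeasureTheory Filter ENNReal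
open scoped Classical

noncomputable section

/-- A time-homogeneous Markov chain with values in `ℕ`, encoded by its family of path laws
`ℙ k` on `ℕ → ℕ` (law started from `k`) together with one-step transition probabilities `p`,
the finite-dimensional distributions being the usual products of transition probabilities. -/
structure MCNat where
  /-- transition probabilities -/
  p : ℕ → ℕ → ℝ≥0∞
  p_sum : ∀ x, ∑' y, p x y = 1
  /-- law of the chain started from `k`, on path space -/
  ℙ : ℕ → Measure (ℕ → ℕ)
  prob : ∀ k, IsProbabilityMeasure (ℙ k)
  fdd : ∀ (k n : ℕ) (path : ℕ → ℕ),
    ℙ k {ω | ∀ i ≤ n, ω i = path i} =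
      if path 0 = k then ∏ i ∈ Finset.range n, p (path i) (path (i + 1)) else 0

/-- `T₀`, the first time after time `0` at which the path hits `0` (with value `∞` if the path
never returns to `0`), viewed in `ℝ≥0∞`. -/
def T0 (ω : ℕ → ℕ) : ℝ≥0∞ := sInf {t : ℝ≥0∞ | ∃ i : ℕ, 0 < i ∧ ω i = 0 ∧ t = i}

/-- `𝔼_k(T₀)`. -/
def ET0 (M : MCNat) (k : ℕ) : ℝ≥0∞ := ∫⁻ ω, T0 ω ∂(M.ℙ k)

/-- `u_n = ℙ_0(Z_n = 0)`. -/
def u (M : MCNat) (n : ℕ) : ℝ≥0∞ := M.ℙ 0 {ω | ω n = 0}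

/-- `u_∞ = 1 / 𝔼_0(T₀)`, with the convention `1/∞ = 0`. -/
def uinf (M : MCNat) : ℝ≥0∞ := (ET0 M 0)⁻¹

/-- `𝔼_k(T₀ · 1_{T₀ > t})`, as a real number. -/
def ET0trunc (M : MCNat) (k : ℕ) (t : ℝ≥0∞) : ℝ :=
  (∫⁻ ω in {ω | t < T0 ω}, T0 ω ∂(M.ℙ k)).toReal

namespace MCAux

/-- cylinder set -/
def Cyl (n : ℕ) (q : ℕ → ℕ) : Set (ℕ → ℕ) := {ω | ∀ i ≤ n, ω i = q i}

/-- representative path of a finite path -/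
def rep (n : ℕ) (v : Fin (n+1) → ℕ) : ℕ → ℕ := fun i => if h : i < n+1 then v ⟨i, h⟩ else 0

lemma rep_eq (n : ℕ) (v : Fin (n+1) → ℕ) {i : ℕ} (hi : i ≤ n) :
    rep n v i = v ⟨i, Nat.lt_succ_of_le hi⟩ := by
  simp [rep, Nat.lt_succ_of_le hi]

lemma rep_res (n : ℕ) (ω : ℕ → ℕ) {i : ℕ} (hi : i ≤ n) :
    rep n (fun j : Fin (n+1) => ω j) i = ω i := by
  simp [rep_eq n _ hi]

lemma measurableSet_cyl {n : ℕ} {q : ℕ → ℕ} : MeasurableSet (Cyl n q) := by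
  have : Cyl n q = ⋂ (i : ℕ) (_ : i ≤ n), (fun ω : ℕ → ℕ => ω i) ⁻¹' {q i} := by
    ext ω; simp [Cyl, Set.mem_iInter]
  rw [this]
  exact MeasurableSet.iInter fun i => MeasurableSet.iInter fun _ =>
    measurable_pi_apply i (measurableSet_singleton _)

lemma union_of_dep {n : ℕ} {E : Set (ℕ → ℕ)}
    (hdep : ∀ ω ω' : ℕ → ℕ, (∀ i ≤ n, ω i = ω' i) → ω ∈ E → ω' ∈ E)
    (S : Set (ℕ → ℕ)) :
    E ∩ S = ⋃ v : Fin (n+1) → ℕ,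
      (if rep n v ∈ E then Cyl n (rep n v) ∩ S else ∅) := by
  ext ω
  constructor
  · rintro ⟨hE, hS⟩
    refine Set.mem_iUnion.2 ⟨fun j : Fin (n+1) => ω j, ?_⟩
    have hag : ∀ i ≤ n, ω i = rep n (fun j : Fin (n+1) => ω j) i :=
      fun i hi => (rep_res n ω hi).symm
    rw [if_pos (hdep ω _ hag hE)]
    exact ⟨hag, hS⟩
  · intro hω
    obtain ⟨v, hv⟩ := Set.mem_iUnion.1 hω
    by_cases hE : rep n v ∈ E
    · rw [if_pos hE] at hv
      exact ⟨hdep (rep n v) ω (fun i hi => (hv.1 i hi).symm) hE, hv.2⟩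
    · rw [if_neg hE] at hv; exact absurd hv (Set.notMem_empty ω)

lemma measurableSet_of_dep {n : ℕ} {E : Set (ℕ → ℕ)}
    (hdep : ∀ ω ω' : ℕ → ℕ, (∀ i ≤ n, ω i = ω' i) → ω ∈ E → ω' ∈ E) :
    MeasurableSet E := by
  have h := union_of_dep hdep Set.univ
  rw [Set.inter_univ] at h
  rw [h]
  exact MeasurableSet.iUnion fun v => by
    split_ifs
    · exact measurableSet_cyl.inter MeasurableSet.univ
    · exact MeasurableSet.empty

lemma cyl_disjoint {n : ℕ} {v v' : Fin (n+1) → ℕ} (h : v ≠ v') :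
    Disjoint (Cyl n (rep n v)) (Cyl n (rep n v')) := by
  rw [Set.disjoint_left]
  intro ω h1 h2
  apply h
  funext i
  have e1 := h1 i.1 (Nat.lt_succ_iff.1 i.2)
  have e2 := h2 i.1 (Nat.lt_succ_iff.1 i.2)
  rw [rep_eq n v (Nat.lt_succ_iff.1 i.2)] at e1
  rw [rep_eq n v' (Nat.lt_succ_iff.1 i.2)] at e2
  rw [← e1, ← e2]

lemma meas_inter_eq_tsum (M : MCNat) (k n : ℕ) {E : Set (ℕ → ℕ)}
    (hdep : ∀ ω ω' : ℕ → ℕ, (∀ i ≤ n, ω i = ω' i) → ω ∈ E → ω' ∈ E)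
    (S : Set (ℕ → ℕ)) (hS : MeasurableSet S) :
    M.ℙ k (E ∩ S) = ∑' v : Fin (n+1) → ℕ,
      if rep n v ∈ E then M.ℙ k (Cyl n (rep n v) ∩ S) else 0 := by
  rw [union_of_dep hdep S, measure_iUnion]
  · exact tsum_congr fun v => by split_ifs <;> simp
  · intro v v' hne
    simp only [Function.onFun]
    split_ifs
    · exact (cyl_disjoint hne).mono Set.inter_subset_left Set.inter_subset_left
    · simp
    · simp
    · simp
  · intro v
    split_ifs
    · exact measurableSet_cyl.inter hS
    · exact MeasurableSet.empty

lemma meas_eq_tsum (M : MCNat) (k n : ℕ) {E : Set (ℕ → ℕ)}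
    (hdep : ∀ ω ω' : ℕ → ℕ, (∀ i ≤ n, ω i = ω' i) → ω ∈ E → ω' ∈ E) :
    M.ℙ k E = ∑' v : Fin (n+1) → ℕ,
      if rep n v ∈ E then M.ℙ k (Cyl n (rep n v)) else 0 := by
  have h := meas_inter_eq_tsum M k n hdep Set.univ MeasurableSet.univ
  simpa [Set.inter_univ] using h

/-- the collection of cylinder sets -/
def cylSets : Set (Set (ℕ → ℕ)) := {s | ∃ n q, s = Cyl n q}

lemma isPiSystem_cylSets : IsPiSystem cylSets := by
  rintro s ⟨n1, q1, rfl⟩ t ⟨n2, q2, rfl⟩ hne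
  obtain ⟨ω, hω1, hω2⟩ := hne
  rcases le_total n1 n2 with h | h
  · have : Cyl n1 q1 ∩ Cyl n2 q2 = Cyl n2 q2 := by
      apply Set.inter_eq_self_of_subset_right
      intro ω' hω' i hi
      rw [hω' i (hi.trans h), ← hω2 i (hi.trans h), hω1 i hi]
    rw [this]; exact ⟨n2, q2, rfl⟩
  · have : Cyl n1 q1 ∩ Cyl n2 q2 = Cyl n1 q1 := by
      apply Set.inter_eq_self_of_subset_left
      intro ω' hω' i hi
      rw [hω' i (hi.trans h), ← hω1 i (hi.trans h), hω2 i hi]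
    rw [this]; exact ⟨n1, q1, rfl⟩

lemma pi_eq_generateFrom :
    (inferInstance : MeasurableSpace (ℕ → ℕ)) = .generateFrom cylSets := by
  apply le_antisymm
  · refine iSup_le fun i => ?_
    intro t ht
    obtain ⟨s, -, rfl⟩ := ht
    have : (fun ω : ℕ → ℕ => ω i) ⁻¹' s =
        ⋃ (v : Fin (i+1) → ℕ) (_ : rep i v i ∈ s), Cyl i (rep i v) := by
      ext ω
      simp only [Set.mem_preimage, Set.mem_iUnion]
      constructor
      · intro h
        refine ⟨fun j : Fin (i+1) => ω j, ?_, fun j hj => (rep_res i ω hj).symm⟩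
        rwa [rep_res i ω le_rfl]
      · rintro ⟨v, hv, hc⟩
        rwa [hc i le_rfl]
    rw [this]
    exact MeasurableSet.iUnion fun v => MeasurableSet.iUnion fun hv =>
      MeasurableSpace.measurableSet_generateFrom ⟨i, rep i v, rfl⟩
  · exact MeasurableSpace.generateFrom_le fun s ⟨n, q, h⟩ => h ▸ measurableSet_cyl


lemma meas_cyl (M : MCNat) (k n : ℕ) (q : ℕ → ℕ) :
    M.ℙ k (Cyl n q) = if q 0 = k then ∏ i ∈ Finset.range n, M.p (q i) (q (i + 1)) else 0 :=
  M.fdd k n q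

/-- the shifted path -/
def shift (j : ℕ) (ω : ℕ → ℕ) : ℕ → ℕ := fun i => ω (j + i)

lemma measurable_shift (j : ℕ) : Measurable (shift j) :=
  measurable_pi_lambda _ fun i => measurable_pi_apply (j + i)

/-- gluing two paths at time j -/
def glue (j : ℕ) (a q : ℕ → ℕ) : ℕ → ℕ := fun i => if i ≤ j then a i else q (i - j)

lemma glue_left {j : ℕ} {a q : ℕ → ℕ} {i : ℕ} (hi : i ≤ j) : glue j a q i = a i := by
  simp [glue, hi]

lemma glue_right {j : ℕ} {a q : ℕ → ℕ} (haj : a j = 0) (hq0 : q 0 = 0) (i : ℕ) :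
    glue j a q (j + i) = q i := by
  rcases Nat.eq_zero_or_pos i with rfl | hi
  · simp [glue, haj, hq0]
  · have : ¬ (j + i ≤ j) := by omega
    simp [glue, this]

lemma cyl_inter_shift {j m : ℕ} {a q : ℕ → ℕ} (haj : a j = 0) (hq0 : q 0 = 0) :
    Cyl j a ∩ (shift j) ⁻¹' (Cyl m q) = Cyl (j + m) (glue j a q) := by
  ext ω
  constructor
  · rintro ⟨hc, hs⟩ i hi
    by_cases hij : i ≤ j
    · rw [glue_left hij]; exact hc i hij
    · have h1 : i = j + (i - j) := by omega
      rw [h1, glue_right haj hq0]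
      have := hs (i - j) (by omega)
      simpa [shift] using this
  · intro h
    constructor
    · intro i hi
      rw [h i (by omega), glue_left hi]
    · intro i hi
      show ω (j + i) = q i
      rw [h (j + i) (by omega), glue_right haj hq0]

lemma meas_glue (M : MCNat) (k j m : ℕ) {a q : ℕ → ℕ} (haj : a j = 0) (hq0 : q 0 = 0) :
    M.ℙ k (Cyl (j + m) (glue j a q)) = M.ℙ k (Cyl j a) * M.ℙ 0 (Cyl m q) := by
  rw [meas_cyl, meas_cyl, meas_cyl]
  have hg0 : glue j a q 0 = a 0 := glue_left (Nat.zero_le j)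
  have hsplit : ∏ i ∈ Finset.range (j + m), M.p (glue j a q i) (glue j a q (i + 1)) =
      (∏ i ∈ Finset.range j, M.p (a i) (a (i + 1))) *
      (∏ i ∈ Finset.range m, M.p (q i) (q (i + 1))) := by
    rw [Finset.prod_range_add]
    congr 1
    · refine Finset.prod_congr rfl fun i hi => ?_
      have hij : i < j := Finset.mem_range.mp hi
      rw [glue_left (by omega : i ≤ j), glue_left (by omega : i + 1 ≤ j)]
    · refine Finset.prod_congr rfl fun i hi => ?_
      have h1 : glue j a q (j + i) = q i := glue_right haj hq0 i
      have h2 : glue j a q (j + i + 1) = q (i + 1) := by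
        rw [show j + i + 1 = j + (i + 1) by omega, glue_right haj hq0]
      rw [h1, h2]
  rw [hg0, hsplit, if_pos hq0]
  split_ifs
  · ring
  · ring

/-- The Markov property at a deterministic time `j`, for events `E` depending on
coordinates `≤ j` and forcing `ω j = 0`. -/
lemma markov (M : MCNat) (k j : ℕ) {E : Set (ℕ → ℕ)}
    (hdep : ∀ ω ω' : ℕ → ℕ, (∀ i ≤ j, ω i = ω' i) → ω ∈ E → ω' ∈ E)
    (hzero : ∀ ω ∈ E, ω j = 0)
    {F : Set (ℕ → ℕ)} (hF : MeasurableSet F) :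
    M.ℙ k (E ∩ (shift j) ⁻¹' F) = M.ℙ k E * M.ℙ 0 F := by
  haveI := M.prob k
  haveI := M.prob 0
  have hshift := measurable_shift j
  set ν1 : Measure (ℕ → ℕ) := Measure.map (shift j) ((M.ℙ k).restrict E) with hν1
  set ν2 : Measure (ℕ → ℕ) := (M.ℙ k E) • (M.ℙ 0) with hν2
  have hap : ∀ (F' : Set (ℕ → ℕ)), MeasurableSet F' →
      ν1 F' = M.ℙ k (E ∩ (shift j) ⁻¹' F') := by
    intro F' hF'
    rw [hν1, Measure.map_apply hshift hF', Measure.restrict_apply (hshift hF'),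
      Set.inter_comm]
  haveI : IsFiniteMeasure ν1 := by
    constructor
    rw [hap _ MeasurableSet.univ]
    exact lt_of_le_of_lt (measure_mono (Set.subset_univ _)) (measure_lt_top _ _)
  haveI : IsFiniteMeasure ν2 := by
    constructor
    rw [hν2, Measure.smul_apply, smul_eq_mul]
    exact ENNReal.mul_lt_top (measure_lt_top _ _) (measure_lt_top _ _)
  have key : ν1 = ν2 := by
    refine ext_of_generate_finite cylSets pi_eq_generateFrom isPiSystem_cylSets ?_ ?_
    · rintro s ⟨m, q, rfl⟩
      rw [hap _ measurableSet_cyl, hν2, Measure.smul_apply, smul_eq_mul]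
      rw [meas_inter_eq_tsum M k j hdep _ (hshift measurableSet_cyl)]
      by_cases hq0 : q 0 = 0
      · have : ∀ v : Fin (j+1) → ℕ,
            (if rep j v ∈ E then M.ℙ k (Cyl j (rep j v) ∩ (shift j) ⁻¹' (Cyl m q)) else 0) =
            (if rep j v ∈ E then M.ℙ k (Cyl j (rep j v)) else 0) * M.ℙ 0 (Cyl m q) := by
          intro v
          split_ifs with hE
          · rw [cyl_inter_shift (hzero _ hE) hq0, meas_glue M k j m (hzero _ hE) hq0]
          · rw [zero_mul]
        rw [tsum_congr this, ENNReal.tsum_mul_right, ← meas_eq_tsum M k j hdep]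
      · have hP0 : M.ℙ 0 (Cyl m q) = 0 := by rw [meas_cyl, if_neg hq0]
        rw [hP0, mul_zero]
        have h0 : ∀ v : Fin (j+1) → ℕ,
            (if rep j v ∈ E then M.ℙ k (Cyl j (rep j v) ∩ (shift j) ⁻¹' (Cyl m q)) else 0) = 0 := by
          intro v
          split_ifs with hE
          · have hempty : Cyl j (rep j v) ∩ (shift j) ⁻¹' (Cyl m q) = ∅ := by
              rw [Set.eq_empty_iff_forall_notMem]
              rintro ω ⟨hc, hs⟩
              apply hq0
              have h1 : ω j = rep j v j := hc j le_rfl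
              have h2 : ω (j + 0) = q 0 := hs 0 (Nat.zero_le m)
              have h3 := hzero _ hE
              rw [← h2]
              simpa [h3] using h1
            rw [hempty, measure_empty]
          · rfl
        rw [tsum_congr h0, tsum_zero]
    · rw [hap _ MeasurableSet.univ, hν2]
      simp only [Set.preimage_univ, Set.inter_univ, Measure.smul_apply, smul_eq_mul,
        measure_univ, mul_one]
  have : ν1 F = ν2 F := by rw [key]
  rw [hap F hF] at this
  rw [this, hν2, Measure.smul_apply, smul_eq_mul]


/-- the event of no return to 0 up to time m -/
def H (m : ℕ) : Set (ℕ → ℕ) := {ω | ∀ i, 0 < i → i ≤ m → ω i ≠ 0}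

lemma H_dep (m : ℕ) : ∀ ω ω' : ℕ → ℕ, (∀ i ≤ m, ω i = ω' i) → ω ∈ H m → ω' ∈ H m := by
  intro ω ω' hag hω i hi0 him
  rw [← hag i him]; exact hω i hi0 him

lemma measurableSet_H {m : ℕ} : MeasurableSet (H m) := by
  have : H m = ⋂ (i : ℕ) (_ : 0 < i) (_ : i ≤ m), (fun ω : ℕ → ℕ => ω i) ⁻¹' {0}ᶜ := by
    ext ω; simp [H, Set.mem_iInter]
  rw [this]
  exact MeasurableSet.iInter fun i => MeasurableSet.iInter fun _ =>
    MeasurableSet.iInter fun _ => measurable_pi_apply i (measurableSet_singleton _).compl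

lemma H_anti {m m' : ℕ} (h : m ≤ m') : H m' ⊆ H m :=
  fun ω hω i hi0 him => hω i hi0 (him.trans h)

lemma H_zero : H 0 = Set.univ := by
  ext ω; simp [H]; intro i h1 h2; omega

/-- the set of return times -/
def RS (ω : ℕ → ℕ) : Set ℕ := {i | 0 < i ∧ ω i = 0}

lemma T0_set_eq (ω : ℕ → ℕ) :
    {t : ℝ≥0∞ | ∃ i : ℕ, 0 < i ∧ ω i = 0 ∧ t = i} = (fun i : ℕ => (i : ℝ≥0∞)) '' RS ω := by
  ext t; constructor
  · rintro ⟨i, h1, h2, rfl⟩; exact ⟨i, ⟨h1, h2⟩, rfl⟩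
  · rintro ⟨i, ⟨h1, h2⟩, rfl⟩; exact ⟨i, h1, h2, rfl⟩

lemma T0_eq_top {ω : ℕ → ℕ} (h : ¬ (RS ω).Nonempty) : T0 ω = ⊤ := by
  rw [T0, T0_set_eq]
  rw [Set.not_nonempty_iff_eq_empty] at h
  rw [h]; simp

lemma T0_eq_cast {ω : ℕ → ℕ} (h : (RS ω).Nonempty) : T0 ω = ((sInf (RS ω) : ℕ) : ℝ≥0∞) := by
  rw [T0, T0_set_eq]
  apply le_antisymm
  · exact sInf_le ⟨_, Nat.sInf_mem h, rfl⟩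
  · refine le_sInf ?_
    rintro t ⟨i, hi, rfl⟩
    simp only []
    exact_mod_cast Nat.sInf_le hi

lemma mem_H_iff {m : ℕ} {ω : ℕ → ℕ} : ω ∈ H m ↔ (m : ℝ≥0∞) < T0 ω := by
  constructor
  · intro hω
    by_cases h : (RS ω).Nonempty
    · rw [T0_eq_cast h]
      obtain ⟨h1, h2⟩ := Nat.sInf_mem h
      have : m < sInf (RS ω) := by
        by_contra hc
        exact hω _ h1 (by omega) h2
      exact_mod_cast this
    · rw [T0_eq_top h]; exact natCast_lt_top m
  · intro h i hi0 him hωi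
    have : T0 ω ≤ i := by
      rw [T0]; exact sInf_le ⟨i, hi0, hωi, rfl⟩
    have : (m : ℝ≥0∞) < i := lt_of_lt_of_le h this
    exact absurd (by exact_mod_cast this) (by omega)

lemma setT0_eq (m : ℕ) : {ω : ℕ → ℕ | (m : ℝ≥0∞) < T0 ω} = H m := by
  ext ω; exact mem_H_iff.symm

lemma one_le_T0 (ω : ℕ → ℕ) : 1 ≤ T0 ω := by
  rw [T0]
  refine le_sInf ?_
  rintro t ⟨i, hi, -, rfl⟩
  exact_mod_cast hi

lemma setT0_div_eq (n : ℕ) : {ω : ℕ → ℕ | (n : ℝ≥0∞) / 4 < T0 ω} = H (n / 4) := by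
  rw [← setT0_eq]
  ext ω
  simp only [Set.mem_setOf_eq]
  by_cases h : (RS ω).Nonempty
  · rw [T0_eq_cast h]
    set j := sInf (RS ω)
    constructor
    · intro hlt
      have h1 : (n : ℝ≥0∞) < j * 4 := (ENNReal.div_lt_iff (by simp) (by simp)).1 hlt
      have h2 : n < j * 4 := by exact_mod_cast (by push_cast at h1 ⊢; exact_mod_cast h1 : (n:ℝ≥0∞) < ((j*4 : ℕ) : ℝ≥0∞))
      exact_mod_cast (Nat.div_lt_iff_lt_mul (by norm_num)).2 h2
    · intro hlt
      have h2 : n / 4 < j := by exact_mod_cast hlt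
      have h3 : n < j * 4 := (Nat.div_lt_iff_lt_mul (by norm_num)).1 h2
      refine (ENNReal.div_lt_iff (by simp) (by simp)).2 ?_
      exact_mod_cast h3
  · rw [T0_eq_top h]
    constructor
    · intro _; exact natCast_lt_top _
    · intro _
      exact ENNReal.div_lt_top (by simp) (by norm_num)

lemma tsum_ite_lt (x : ℝ≥0∞) (hx : x = ⊤ ∨ ∃ N : ℕ, x = N) :
    ∑' i : ℕ, (if (i : ℝ≥0∞) < x then (1 : ℝ≥0∞) else 0) = x := by
  rcases hx with rfl | ⟨N, rfl⟩
  · have : ∀ i : ℕ, (if (i : ℝ≥0∞) < ⊤ then (1 : ℝ≥0∞) else 0) = 1 := by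
      intro i; rw [if_pos (natCast_lt_top i)]
    rw [tsum_congr this]
    exact tsum_const_eq_top_of_ne_zero one_ne_zero
  · rw [tsum_eq_sum (s := Finset.range N) ?_]
    · have : ∀ i ∈ Finset.range N, (if (i : ℝ≥0∞) < N then (1:ℝ≥0∞) else 0) = 1 := by
        intro i hi
        rw [if_pos (by exact_mod_cast Finset.mem_range.1 hi)]
      rw [Finset.sum_congr rfl this]
      simp
    · intro b hb
      rw [if_neg]
      intro hc
      exact hb (Finset.mem_range.2 (by exact_mod_cast hc))

lemma T0_rep_or (ω : ℕ → ℕ) : T0 ω = ⊤ ∨ ∃ N : ℕ, T0 ω = N := by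
  by_cases h : (RS ω).Nonempty
  · exact Or.inr ⟨_, T0_eq_cast h⟩
  · exact Or.inl (T0_eq_top h)

lemma T0_eq_tsum_indicator (ω : ℕ → ℕ) :
    T0 ω = ∑' i : ℕ, (H i).indicator 1 ω := by
  have : ∀ i : ℕ, (H i).indicator (1 : (ℕ → ℕ) → ℝ≥0∞) ω
      = (if (i : ℝ≥0∞) < T0 ω then (1 : ℝ≥0∞) else 0) := by
    intro i
    by_cases h : ω ∈ H i
    · simp [Set.indicator_of_mem h, if_pos (mem_H_iff.1 h)]
    · rw [Set.indicator_of_notMem h, if_neg (fun hc => h (mem_H_iff.2 hc))]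
  rw [tsum_congr this, tsum_ite_lt _ (T0_rep_or ω)]

lemma ET0_eq (M : MCNat) (k : ℕ) : ET0 M k = ∑' i : ℕ, M.ℙ k (H i) := by
  rw [ET0, lintegral_congr T0_eq_tsum_indicator, lintegral_tsum]
  · exact tsum_congr fun i => lintegral_indicator_one measurableSet_H
  · exact fun i => ((measurable_const.indicator measurableSet_H)).aemeasurable

lemma prob_H_le_Etr (M : MCNat) (k m : ℕ) :
    M.ℙ k (H m) ≤ ∫⁻ ω in H m, T0 ω ∂(M.ℙ k) := by
  rw [← setLIntegral_one]
  exact lintegral_mono fun ω => one_le_T0 ω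

lemma tsum_tail_le_Etr (M : MCNat) (k m : ℕ) :
    ∑' s : ℕ, (if m < s then M.ℙ k (H s) else 0) ≤ ∫⁻ ω in H m, T0 ω ∂(M.ℙ k) := by
  have h1 : ∀ s : ℕ, (if m < s then M.ℙ k (H s) else 0) =
      ∫⁻ ω, (if m < s then (H s).indicator (1 : (ℕ→ℕ)→ℝ≥0∞) ω else 0) ∂(M.ℙ k) := by
    intro s
    split_ifs
    · rw [lintegral_indicator_one measurableSet_H]
    · rw [lintegral_zero]
  have hmeas : ∀ s : ℕ, AEMeasurable
      (fun ω => if m < s then (H s).indicator (1 : (ℕ→ℕ)→ℝ≥0∞) ω else 0) (M.ℙ k) := by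
    intro s
    by_cases hs : m < s
    · simp only [if_pos hs]
      exact (measurable_const.indicator measurableSet_H).aemeasurable
    · simp only [if_neg hs]
      exact aemeasurable_const
  rw [tsum_congr h1, ← lintegral_tsum hmeas, ← lintegral_indicator measurableSet_H]
  apply lintegral_mono
  intro ω
  dsimp only
  by_cases hω : ω ∈ H m
  · rw [Set.indicator_of_mem hω, T0_eq_tsum_indicator]
    apply Summable.tsum_le_tsum _ ENNReal.summable ENNReal.summable
    intro s
    split_ifs
    · exact le_rfl
    · exact zero_le
  · rw [Set.indicator_of_notMem hω]
    have h0 : ∀ s : ℕ, (if m < s then (H s).indicator (1 : (ℕ→ℕ)→ℝ≥0∞) ω else 0) = 0 := by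
      intro s
      split_ifs with hs
      · exact Set.indicator_of_notMem (fun hc => hω (H_anti (le_of_lt hs) hc)) 1
      · rfl
    rw [tsum_congr h0, tsum_zero]


lemma measurableSet_coord (t l : ℕ) : MeasurableSet {ω : ℕ → ℕ | ω t = l} := by
  have h : {ω : ℕ → ℕ | ω t = l} = (fun ω : ℕ → ℕ => ω t) ⁻¹' {l} := rfl
  rw [h]
  exact measurable_pi_apply t (measurableSet_singleton l)

/-- first return to 0 happens at time j+1 -/
def Fst (j : ℕ) : Set (ℕ → ℕ) := H j ∩ {ω | ω (j+1) = 0}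

lemma measurableSet_Fst {j : ℕ} : MeasurableSet (Fst j) :=
  measurableSet_H.inter (measurableSet_coord _ _)

/-- `f M k j = ℙ_k(T0 = j+1)` -/
def f (M : MCNat) (k j : ℕ) : ℝ≥0∞ := M.ℙ k (Fst j)

/-- `g M s l = ℙ_0(Z_s = l, T0 > s)` -/
def g (M : MCNat) (s l : ℕ) : ℝ≥0∞ := M.ℙ 0 (H s ∩ {ω | ω s = l})

/-- `Gt M s = ℙ_0(T0 > s)` -/
def Gt (M : MCNat) (s : ℕ) : ℝ≥0∞ := M.ℙ 0 (H s)

lemma Fst_dep (j : ℕ) : ∀ ω ω' : ℕ → ℕ, (∀ i ≤ j + 1, ω i = ω' i) → ω ∈ Fst j → ω' ∈ Fst j := by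
  rintro ω ω' hag ⟨h1, h2⟩
  constructor
  · intro i hi0 hij
    rw [← hag i (by omega)]
    exact h1 i hi0 hij
  · show ω' (j+1) = 0
    rw [← hag (j+1) le_rfl]
    exact h2

lemma Fst_disjoint {j j' : ℕ} (h : j ≠ j') : Disjoint (Fst j) (Fst j') := by
  rw [Set.disjoint_left]
  rintro ω ⟨h1, h2⟩ ⟨h1', h2'⟩
  rcases Nat.lt_or_ge j j' with hlt | hge
  · exact h1' (j+1) (by omega) (by omega) h2
  · have : j' < j := by omega
    exact h1 (j'+1) (by omega) (by omega) h2'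

lemma compl_rec : (⋃ j : ℕ, Fst j)ᶜ = ⋂ m : ℕ, H m := by
  ext ω
  simp only [Set.mem_compl_iff, Set.mem_iUnion, not_exists, Set.mem_iInter]
  constructor
  · intro h m i hi0 him
    intro hωi
    -- ω hits zero at i ≥ 1; take the least such
    have hne : {t : ℕ | 0 < t ∧ ω t = 0}.Nonempty := ⟨i, hi0, hωi⟩
    set i0 := sInf {t : ℕ | 0 < t ∧ ω t = 0} with hi0def
    obtain ⟨hi01, hi02⟩ := Nat.sInf_mem hne
    apply h (i0 - 1)
    constructor
    · intro t ht0 htle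
      intro hωt
      have hmem : t ∈ {t : ℕ | 0 < t ∧ ω t = 0} := ⟨ht0, hωt⟩
      have := Nat.sInf_le hmem
      omega
    · show ω (i0 - 1 + 1) = 0
      rw [show i0 - 1 + 1 = i0 by omega]
      exact hi02
  · intro h j ⟨h1, h2⟩
    exact h (j+1) (j+1) (by omega) le_rfl h2

lemma tsum_f_eq_one (M : MCNat) (k : ℕ) (hT : ∑' i : ℕ, M.ℙ k (H i) ≠ ⊤) :
    ∑' j : ℕ, f M k j = 1 := by
  haveI := M.prob k
  have hmeas : MeasurableSet (⋃ j : ℕ, Fst j) := MeasurableSet.iUnion fun j => measurableSet_Fst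
  have hcompl : M.ℙ k ((⋃ j : ℕ, Fst j)ᶜ) = 0 := by
    rw [compl_rec]
    by_contra hc
    have hle : ∀ m : ℕ, M.ℙ k (⋂ m : ℕ, H m) ≤ M.ℙ k (H m) :=
      fun m => measure_mono (Set.iInter_subset _ m)
    have h2 : (∑' _ : ℕ, M.ℙ k (⋂ m : ℕ, H m)) = ⊤ := tsum_const_eq_top_of_ne_zero hc
    have h3 : (∑' _ : ℕ, M.ℙ k (⋂ m : ℕ, H m)) ≤ ∑' i : ℕ, M.ℙ k (H i) :=
      Summable.tsum_le_tsum hle ENNReal.summable ENNReal.summable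
    exact hT (top_le_iff.1 (h2 ▸ h3))
  have h1 : M.ℙ k (⋃ j : ℕ, Fst j) = 1 := by
    have := measure_add_measure_compl (μ := M.ℙ k) hmeas
    rw [hcompl, add_zero] at this
    rw [this, measure_univ]
  rw [← h1, measure_iUnion (fun j j' h => (Fst_disjoint h)) (fun j => measurableSet_Fst)]
  rfl

lemma mem_Fst_of_least {ω : ℕ → ℕ} {i : ℕ} (hi0 : 0 < i) (hωi : ω i = 0) :
    ω ∈ Fst (sInf {t : ℕ | 0 < t ∧ ω t = 0} - 1) ∧
      0 < sInf {t : ℕ | 0 < t ∧ ω t = 0} ∧ sInf {t : ℕ | 0 < t ∧ ω t = 0} ≤ i := by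
  have hne : {t : ℕ | 0 < t ∧ ω t = 0}.Nonempty := ⟨i, hi0, hωi⟩
  obtain ⟨hi01, hi02⟩ := Nat.sInf_mem hne
  refine ⟨⟨?_, ?_⟩, hi01, Nat.sInf_le ⟨hi0, hωi⟩⟩
  · intro t ht0 htle hωt
    have hmem : t ∈ {t : ℕ | 0 < t ∧ ω t = 0} := ⟨ht0, hωt⟩
    have := Nat.sInf_le hmem
    omega
  · show ω (sInf {t : ℕ | 0 < t ∧ ω t = 0} - 1 + 1) = 0
    rw [show sInf {t : ℕ | 0 < t ∧ ω t = 0} - 1 + 1 = sInf {t : ℕ | 0 < t ∧ ω t = 0} by omega]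
    exact hi02

lemma decompose_a (M : MCNat) (k n l : ℕ) :
    M.ℙ k {ω | ω n = l} =
      (∑ j ∈ Finset.range n, f M k j * M.ℙ 0 {ω | ω (n-1-j) = l})
      + M.ℙ k ({ω | ω n = l} ∩ H n) := by
  set A := {ω : ℕ → ℕ | ω n = l} with hA
  have hAmeas : MeasurableSet A := measurableSet_coord n l
  have hcover : A = (⋃ j ∈ Finset.range n, A ∩ Fst j) ∪ (A ∩ H n) := by
    ext ω
    constructor
    · intro hω
      by_cases hH : ω ∈ H n
      · exact Or.inr ⟨hω, hH⟩
      · left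
        simp only [H, Set.mem_setOf_eq, not_forall] at hH
        push_neg at hH
        obtain ⟨i, hi0, hin, hωi⟩ := hH
        obtain ⟨hmem, h1, h2⟩ := mem_Fst_of_least hi0 hωi
        simp only [Set.mem_iUnion]
        exact ⟨_, Finset.mem_range.2 (by omega), hω, hmem⟩
    · rintro (hω | hω)
      · simp only [Set.mem_iUnion] at hω
        obtain ⟨j, hj, hωA, -⟩ := hω
        exact hωA
      · exact hω.1
  have hdisj : Disjoint (⋃ j ∈ Finset.range n, A ∩ Fst j) (A ∩ H n) := by
    rw [Set.disjoint_left]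
    intro ω hω hω'
    simp only [Set.mem_iUnion] at hω
    obtain ⟨j, hj, -, -, hFst⟩ := hω
    have hjn : j < n := Finset.mem_range.1 hj
    exact hω'.2 (j+1) (by omega) (by omega : j + 1 ≤ n) hFst
  nth_rewrite 1 [hcover]
  rw [measure_union hdisj (hAmeas.inter measurableSet_H),
    measure_biUnion_finset ?_ (fun j _ => hAmeas.inter measurableSet_Fst)]
  · congr 1
    refine Finset.sum_congr rfl fun j hj => ?_
    have hjn : j < n := Finset.mem_range.1 hj
    have hset : A ∩ Fst j = Fst j ∩ (shift (j+1)) ⁻¹' {b | b (n-1-j) = l} := by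
      have harith : j + 1 + (n - 1 - j) = n := by omega
      ext ω
      constructor
      · rintro ⟨hωA, hωF⟩
        refine ⟨hωF, ?_⟩
        show ω (j + 1 + (n - 1 - j)) = l
        rw [harith]; exact hωA
      · rintro ⟨hωF, hωS⟩
        refine ⟨?_, hωF⟩
        show ω n = l
        rw [← harith]; exact hωS
    rw [hset, markov M k (j+1) (Fst_dep j) (fun ω hω => hω.2) (measurableSet_coord _ _)]
    rfl
  · intro j hj j' hj' hne
    exact ((Fst_disjoint hne).mono Set.inter_subset_right Set.inter_subset_right)

lemma meas_zero_zero (M : MCNat) : M.ℙ 0 {ω | ω 0 = 0} = 1 := by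
  have h := M.fdd 0 0 (fun _ => 0)
  simp only [Finset.range_zero, Finset.prod_empty, if_pos rfl] at h
  have hset : {ω : ℕ → ℕ | ∀ i ≤ 0, ω i = (fun _ => 0) i} = {ω : ℕ → ℕ | ω 0 = 0} := by
    ext ω; simp [Nat.le_zero]
  rwa [hset] at h

lemma decompose_P0 (M : MCNat) (m l : ℕ) :
    M.ℙ 0 {ω | ω m = l} = ∑ i ∈ Finset.range (m+1), u M i * g M (m-i) l := by
  haveI := M.prob 0
  set A := {ω : ℕ → ℕ | ω m = l} with hA
  have hAmeas : MeasurableSet A := measurableSet_coord m l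
  set B : ℕ → Set (ℕ → ℕ) := fun i =>
    {ω | ω i = 0} ∩ (shift i) ⁻¹' (H (m-i) ∩ {b | b (m-i) = l}) with hB
  have hBmeas : ∀ i, MeasurableSet (B i) := fun i =>
    (measurableSet_coord i 0).inter
      ((measurable_pi_lambda _ fun t => measurable_pi_apply (i+t))
        (measurableSet_H.inter (measurableSet_coord _ _)))
  have hBsub : ∀ i ≤ m, B i ⊆ A := by
    rintro i him ω ⟨h1, h2, h3⟩
    show ω m = l
    have := h3
    show ω m = l
    have harith : i + (m - i) = m := by omega
    have : ω (i + (m - i)) = l := h3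
    rwa [harith] at this
  have hcover : A ∩ {ω | ω 0 = 0} ⊆ ⋃ i ∈ Finset.range (m+1), B i := by
    rintro ω ⟨hωA, hω0⟩
    set i := Nat.findGreatest (fun t => ω t = 0) m with hidef
    have hile : i ≤ m := Nat.findGreatest_le m
    have hi0 : ω i = 0 := Nat.findGreatest_spec (P := fun t => ω t = 0) (Nat.zero_le m) hω0
    simp only [Set.mem_iUnion]
    refine ⟨i, Finset.mem_range.2 (by omega), hi0, ?_, ?_⟩
    · intro t ht0 htle hωt
      exact Nat.findGreatest_is_greatest (P := fun t => ω t = 0)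
        (by omega : i < i + t) (by omega) hωt
    · show ω (i + (m - i)) = l
      rw [show i + (m - i) = m by omega]
      exact hωA
  have hdisjB : ∀ i < m + 1, ∀ i' < m + 1, i ≠ i' → Disjoint (B i) (B i') := by
    have key : ∀ i i', i < i' → i' < m + 1 → Disjoint (B i) (B i') := by
      intro i i' hlt hle
      rw [Set.disjoint_left]
      rintro ω ⟨h1, h2, h3⟩ ⟨h1', h2', h3'⟩
      have : ω (i + (i' - i)) ≠ 0 := h2 (i' - i) (by omega) (by omega)
      rw [show i + (i' - i) = i' by omega] at this
      exact this h1'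
    intro i hi i' hi' hne
    rcases Nat.lt_or_ge i i' with h | h
    · exact key i i' h hi'
    · exact (key i' i (by omega) hi).symm
  have hmeasU : M.ℙ 0 (⋃ i ∈ Finset.range (m+1), B i) = M.ℙ 0 A := by
    apply le_antisymm
    · apply measure_mono
      intro ω hω
      simp only [Set.mem_iUnion] at hω
      obtain ⟨i, hi, hωB⟩ := hω
      exact hBsub i (Nat.lt_succ_iff.1 (Finset.mem_range.1 hi)) hωB
    · have h1 : M.ℙ 0 A ≤ M.ℙ 0 (A ∩ {ω | ω 0 = 0}) + M.ℙ 0 ({ω : ℕ → ℕ | ω 0 = 0}ᶜ) := by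
        refine le_trans (measure_mono ?_) (measure_union_le _ _)
        intro ω hω
        by_cases h : ω 0 = 0
        · exact Or.inl ⟨hω, h⟩
        · exact Or.inr h
      have h2 : M.ℙ 0 ({ω : ℕ → ℕ | ω 0 = 0}ᶜ) = 0 := by
        rw [measure_compl (measurableSet_coord 0 0) (measure_ne_top _ _), meas_zero_zero,
          measure_univ, tsub_self]
      rw [h2, add_zero] at h1
      exact h1.trans (measure_mono hcover)
  rw [← hmeasU, measure_biUnion_finset ?_ (fun i _ => hBmeas i)]
  · refine Finset.sum_congr rfl fun i hi => ?_
    rw [hB]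
    have := markov M 0 i (E := {ω | ω i = 0})
      (fun ω ω' hag hω => by rw [Set.mem_setOf_eq, ← hag i le_rfl]; exact hω)
      (fun ω hω => hω)
      (F := H (m-i) ∩ {b | b (m-i) = l})
      (measurableSet_H.inter (measurableSet_coord _ _))
    rw [this]
    rfl
  · intro i hi i' hi' hne
    exact hdisjB i (by simpa using hi) i' (by simpa using hi') hne

lemma tsum_g_eq (M : MCNat) (s : ℕ) : ∑' l : ℕ, g M s l = Gt M s := by
  have : H s = ⋃ l : ℕ, (H s ∩ {ω | ω s = l}) := by
    ext ω
    simp only [Set.mem_iUnion]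
    constructor
    · intro h; exact ⟨ω s, h, rfl⟩
    · rintro ⟨l, h, -⟩; exact h
  have hd : Pairwise (Function.onFun Disjoint (fun l : ℕ => H s ∩ {ω : ℕ → ℕ | ω s = l})) := by
    intro l l' hne
    rw [Function.onFun, Set.disjoint_left]
    rintro ω ⟨-, h2⟩ ⟨-, h2'⟩
    exact hne (h2 ▸ h2' ▸ rfl)
  have hmu := measure_iUnion (μ := M.ℙ 0) hd
    (fun l => measurableSet_H.inter (measurableSet_coord s l))
  rw [Gt, this, hmu]
  rfl

lemma tsum_rho (M : MCNat) (k n : ℕ) :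
    ∑' l : ℕ, M.ℙ k ({ω | ω n = l} ∩ H n) = M.ℙ k (H n) := by
  have : H n = ⋃ l : ℕ, ({ω | ω n = l} ∩ H n) := by
    ext ω
    simp only [Set.mem_iUnion]
    constructor
    · intro h; exact ⟨ω n, rfl, h⟩
    · rintro ⟨l, -, h⟩; exact h
  have hd : Pairwise (Function.onFun Disjoint (fun l : ℕ => {ω : ℕ → ℕ | ω n = l} ∩ H n)) := by
    intro l l' hne
    rw [Function.onFun, Set.disjoint_left]
    rintro ω ⟨h2, -⟩ ⟨h2', -⟩
    exact hne (h2 ▸ h2' ▸ rfl)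
  have hmu := measure_iUnion (μ := M.ℙ k) hd
    (fun l => (measurableSet_coord n l).inter measurableSet_H)
  conv_rhs => rw [this]
  rw [hmu]

lemma tsum_coord (M : MCNat) (k n : ℕ) : ∑' l : ℕ, M.ℙ k {ω | ω n = l} = 1 := by
  haveI := M.prob k
  have : (Set.univ : Set (ℕ → ℕ)) = ⋃ l : ℕ, {ω | ω n = l} := by
    ext ω
    simp only [Set.mem_iUnion, Set.mem_univ, true_iff]
    exact ⟨ω n, rfl⟩
  have hd : Pairwise (Function.onFun Disjoint (fun l : ℕ => {ω : ℕ → ℕ | ω n = l})) := by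
    intro l l' hne
    rw [Function.onFun, Set.disjoint_left]
    rintro ω h2 h2'
    exact hne (h2 ▸ h2' ▸ rfl)
  have hmu := measure_iUnion (μ := M.ℙ k) hd (fun l => measurableSet_coord n l)
  rw [← measure_univ (μ := M.ℙ k), this, hmu]

lemma tsum_f_tail_le (M : MCNat) (k m4 : ℕ) :
    ∑' j : ℕ, (if m4 ≤ j then f M k j else 0) ≤ M.ℙ k (H m4) := by
  have hpt : ∀ j : ℕ, (if m4 ≤ j then f M k j else 0) = M.ℙ k (Fst j ∩ H m4) := by
    intro j
    split_ifs with h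
    · rw [f]
      congr 1
      rw [Set.inter_eq_self_of_subset_left]
      exact (Set.inter_subset_left).trans (H_anti h)
    · have : Fst j ∩ H m4 = ∅ := by
        rw [Set.eq_empty_iff_forall_notMem]
        rintro ω ⟨⟨-, h2⟩, hH⟩
        exact hH (j+1) (by omega) (by omega) h2
      rw [this, measure_empty]
  have hd : Pairwise (Function.onFun Disjoint (fun j : ℕ => Fst j ∩ H m4)) := by
    intro j j' hne
    exact (Fst_disjoint hne).mono Set.inter_subset_left Set.inter_subset_left
  have hmu := measure_iUnion (μ := M.ℙ k) hd
    (fun j => measurableSet_Fst.inter measurableSet_H)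
  rw [tsum_congr hpt, ← hmu]
  exact measure_mono (Set.iUnion_subset fun j => Set.inter_subset_right)


lemma ET0_pos (M : MCNat) : 1 ≤ ET0 M 0 := by
  haveI := M.prob 0
  rw [ET0_eq]
  refine le_trans ?_ (ENNReal.le_tsum 0)
  rw [H_zero, measure_univ]

lemma uinf_le_one (M : MCNat) : uinf M ≤ 1 := by
  rw [uinf]
  exact ENNReal.inv_le_one.2 (ET0_pos M)

lemma uinf_ne_top (M : MCNat) : uinf M ≠ ⊤ := lt_of_le_of_lt (uinf_le_one M) one_lt_top |>.ne

lemma u_le_one (M : MCNat) (m : ℕ) : u M m ≤ 1 := by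
  haveI := M.prob 0
  exact prob_le_one

lemma u_ne_top (M : MCNat) (m : ℕ) : u M m ≠ ⊤ := lt_of_le_of_lt (u_le_one M m) one_lt_top |>.ne

lemma P0_reflect (M : MCNat) (m l : ℕ) :
    M.ℙ 0 {ω | ω m = l} = ∑ s ∈ Finset.range (m+1), u M (m-s) * g M s l := by
  rw [decompose_P0, ← Finset.sum_range_reflect (fun i => u M i * g M (m-i) l) (m+1)]
  refine Finset.sum_congr rfl fun j hj => ?_
  have hjm : j < m + 1 := Finset.mem_range.1 hj
  have h1 : m + 1 - 1 - j = m - j := by omega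
  rw [h1, show m - (m - j) = j by omega]

/-- The key renewal identity for the invariant measure: `μ {l} = uinf · Σ_s g s l`. -/
lemma mu_eq (M : MCNat) (hT : ET0 M 0 < ⊤)
    (μ : Measure ℕ) (hμ : IsProbabilityMeasure μ)
    (hconv : ∀ k l : ℕ, Tendsto (fun n => M.ℙ k {ω | ω n = l}) atTop (nhds (μ {l})))
    (l : ℕ) :
    μ {l} = uinf M * ∑' s : ℕ, g M s l := by
  haveI := M.prob 0
  have hu : Tendsto (fun m => u M m) atTop (nhds (μ {0})) := hconv 0 0
  have hgle : ∀ s j, g M s j ≤ Gt M s := fun s j => measure_mono Set.inter_subset_left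
  have hGsum : ∑' s : ℕ, Gt M s = ET0 M 0 := (ET0_eq M 0).symm
  have hgfin : ∀ j, ∑' s : ℕ, g M s j ≠ ⊤ := by
    intro j
    refine ne_top_of_le_ne_top ?_ (Summable.tsum_le_tsum (fun s => hgle s j) ENNReal.summable
      ENNReal.summable)
    rw [hGsum]; exact hT.ne
  have key : ∀ j : ℕ, μ {j} = μ {0} * ∑' s : ℕ, g M s j := by
    intro j
    set c : ℕ → ℕ → ℝ≥0∞ := fun m s => if s ≤ m then u M (m-s) * g M s j else 0 with hc
    have hstep1 : ∀ m, M.ℙ 0 {ω | ω m = j} = ∑' s : ℕ, c m s := by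
      intro m
      rw [P0_reflect]
      rw [tsum_eq_sum (s := Finset.range (m+1)) ?_]
      · exact (Finset.sum_congr rfl fun s hs => by
          simp only [hc]
          rw [if_pos (Nat.lt_succ_iff.1 (Finset.mem_range.1 hs))]).symm
      · intro b hb
        simp only [hc]
        exact if_neg (fun hc' => hb (Finset.mem_range.2 (by omega)))
    have hpt : ∀ s : ℕ, Tendsto (fun m => c m s) atTop (nhds (μ {0} * g M s j)) := by
      intro s
      have h1 : Tendsto (fun m => u M (m - s)) atTop (nhds (μ {0})) :=
        hu.comp (tendsto_sub_atTop_nat s)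
      have h2 : Tendsto (fun m => u M (m - s) * g M s j) atTop (nhds (μ {0} * g M s j)) :=
        ENNReal.Tendsto.mul_const h1 (Or.inr (measure_ne_top _ _))
      refine h2.congr' ?_
      filter_upwards [eventually_ge_atTop s] with m hm
      simp only [hc]
      rw [if_pos hm]
    have hbound : ∀ m s, c m s ≤ g M s j := by
      intro m s
      simp only [hc]
      split_ifs
      · exact mul_le_of_le_one_left (zero_le) (u_le_one M _)
      · exact zero_le
    have hDCT := tendsto_lintegral_of_dominated_convergence (μ := (Measure.count : Measure ℕ))
      (F := fun m s => c m s) (f := fun s => μ {0} * g M s j) (bound := fun s => g M s j)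
      (fun m => measurable_from_top) (fun m => Eventually.of_forall (hbound m))
      (by rw [lintegral_count]; exact hgfin j)
      (Eventually.of_forall hpt)
    have hlim : Tendsto (fun m => M.ℙ 0 {ω | ω m = j}) atTop
        (nhds (μ {0} * ∑' s : ℕ, g M s j)) := by
      have e1 : ∀ m, (∫⁻ s, c m s ∂(Measure.count : Measure ℕ)) = M.ℙ 0 {ω | ω m = j} := by
        intro m; rw [lintegral_count, hstep1]
      have e2 : (∫⁻ s, μ {0} * g M s j ∂(Measure.count : Measure ℕ))
          = μ {0} * ∑' s : ℕ, g M s j := by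
        rw [lintegral_count, ENNReal.tsum_mul_left]
      rw [← e2]
      exact hDCT.congr e1
    exact tendsto_nhds_unique (hconv 0 j) hlim
  -- step 2 : μ {0} = uinf M
  have hsum_mu : ∑' j : ℕ, μ {j} = 1 := by
    have hU : (Set.univ : Set ℕ) = ⋃ j : ℕ, {j} := by ext x; simp
    have hmi := measure_iUnion (μ := μ) (f := fun j : ℕ => {j})
      (fun j j' hne => by simp [Set.disjoint_left]; intro a; omega)
      (fun j => measurableSet_singleton j)
    rw [← hmi, ← hU, measure_univ]
  have hmu0 : μ {0} * ET0 M 0 = 1 := by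
    rw [← hsum_mu, tsum_congr key, ENNReal.tsum_mul_left, ← hGsum]
    congr 1
    rw [← ENNReal.tsum_comm]
    exact tsum_congr fun s => (tsum_g_eq M s).symm
  have hET0 : ET0 M 0 ≠ 0 := by
    intro hcon
    rw [hcon] at hmu0
    simp at hmu0
  have hmu0' : μ {0} = uinf M := by
    have := congrArg (fun x => x * (ET0 M 0)⁻¹) hmu0
    simp only [one_mul] at this
    rw [mul_assoc, ENNReal.mul_inv_cancel hET0 hT.ne, mul_one] at this
    rw [this, uinf]
  rw [key l, hmu0']


-- ============ part 6 : generic helper lemmas ============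

lemma tsum_tsub_le {ι : Type*} (F G : ι → ℝ≥0∞) :
    (∑' i, F i) - (∑' i, G i) ≤ ∑' i, (F i - G i) := by
  rw [tsub_le_iff_right, ← ENNReal.tsum_add]
  exact Summable.tsum_le_tsum (fun i => le_tsub_add) ENNReal.summable ENNReal.summable

lemma mul_tsub_le (a b c : ℝ≥0∞) : a * b - a * c ≤ a * (b - c) := by
  rw [tsub_le_iff_right, ← mul_add]
  exact mul_le_mul_right le_tsub_add a

lemma ennreal_abs_eq (x y : ℝ≥0∞) (hx : x ≠ ⊤) (hy : y ≠ ⊤) :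
    (x - y) + (y - x) = ENNReal.ofReal |x.toReal - y.toReal| := by
  rcases le_total x y with h | h
  · rw [tsub_eq_zero_of_le h, zero_add, abs_sub_comm,
      abs_of_nonneg (sub_nonneg.2 (toReal_mono hy h)), ← toReal_sub_of_le h hy,
      ofReal_toReal (ne_top_of_le_ne_top hy tsub_le_self)]
  · rw [tsub_eq_zero_of_le h, add_zero,
      abs_of_nonneg (sub_nonneg.2 (toReal_mono hx h)), ← toReal_sub_of_le h hx,
      ofReal_toReal (ne_top_of_le_ne_top hx tsub_le_self)]

lemma tsum_prod_mul (F G : ℕ → ℝ≥0∞) (c : ℝ≥0∞) :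
    (∑' q : ℕ × ℕ, F q.1 * G q.2 * c) = (∑' j, F j) * (∑' s, G s) * c := by
  rw [ENNReal.tsum_prod']
  have h1 : ∀ j, (∑' s, F j * G s * c) = F j * ((∑' s, G s) * c) := by
    intro j
    calc (∑' s, F j * G s * c) = ∑' s, F j * (G s * c) :=
          tsum_congr fun s => mul_assoc _ _ _
    _ = F j * (∑' s, G s * c) := ENNReal.tsum_mul_left
    _ = F j * ((∑' s, G s) * c) := by rw [ENNReal.tsum_mul_right]
  rw [tsum_congr h1, ENNReal.tsum_mul_right, mul_assoc]


end MCAux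

open MCAux

/-- Quantitative version of the ergodic convergence: if `𝔼_k(T₀) < ∞` for all `k` and `μ` is the
common limiting law of the chain, then there is `A > 0` such that for all `n, k`,
`Σ_l |ℙ_k(Z_n = l) − μ {l}| ≤ A·[sup_{⌊n/2⌋ ≤ l ≤ n} |u_l − u_∞| + 𝔼_0(T₀ 1_{T₀ > n/4})
+ 𝔼_k(T₀ 1_{T₀ > n/4})]`. -/
theorem stmt1 (M : MCNat)
    (h0 : 0 < M.ℙ 0 {ω | ω 1 = 0}) (h1 : M.ℙ 0 {ω | ω 1 = 0} < 1)
    (hT : ∀ k, ET0 M k < ⊤)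
    (μ : Measure ℕ) (hμ : IsProbabilityMeasure μ)
    (hconv : ∀ k l : ℕ, Tendsto (fun n => M.ℙ k {ω | ω n = l}) atTop (nhds (μ {l}))) :
    ∃ A : ℝ, 0 < A ∧ ∀ n k : ℕ,
      ∑' l : ℕ, |(M.ℙ k {ω | ω n = l}).toReal - (μ {l}).toReal| ≤
        A * ((Finset.Icc (n / 2) n).sup' (Finset.nonempty_Icc.2 (Nat.div_le_self n 2))
              (fun l => |(u M l).toReal - (uinf M).toReal|)
            + ET0trunc M 0 ((n : ℝ≥0∞) / 4) + ET0trunc M k ((n : ℝ≥0∞) / 4)) := by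
  have he0 : (1:ℝ) ≤ (ET0 M 0).toReal := by
    have := ENNReal.toReal_mono (hT 0).ne (ET0_pos M)
    simpa using this
  refine ⟨3 * (ET0 M 0).toReal + 1, by linarith, ?_⟩
  intro n k
  haveI := M.prob k
  haveI := M.prob 0
  set m4 := n / 4 with hm4
  set S := (Finset.Icc (n / 2) n).sup' (Finset.nonempty_Icc.2 (Nat.div_le_self n 2))
      (fun l => |(u M l).toReal - (uinf M).toReal|) with hSdef
  have hS0 : 0 ≤ S := by
    rw [hSdef]
    refine le_trans (abs_nonneg ((u M n).toReal - (uinf M).toReal)) ?_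
    exact Finset.le_sup' (fun l => |(u M l).toReal - (uinf M).toReal|)
      (Finset.mem_Icc.2 ⟨Nat.div_le_self n 2, le_rfl⟩)
  set E0 := ET0 M 0 with hE0def
  set Etrk := ∫⁻ ω in H m4, T0 ω ∂(M.ℙ k) with hEtrk
  set Etr0 := ∫⁻ ω in H m4, T0 ω ∂(M.ℙ 0) with hEtr0
  set Pk4 := M.ℙ k (H m4) with hPk4
  have hE0top : E0 ≠ ⊤ := (hT 0).ne
  have hEtrk_top : Etrk ≠ ⊤ := ne_top_of_le_ne_top (hT k).ne (setLIntegral_le_lintegral _ _)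
  have hEtr0_top : Etr0 ≠ ⊤ := ne_top_of_le_ne_top (hT 0).ne (setLIntegral_le_lintegral _ _)
  have hPk4_le : Pk4 ≤ Etrk := prob_H_le_Etr M k m4
  have hfsum : ∑' j, f M k j = 1 := tsum_f_eq_one M k (by rw [← ET0_eq]; exact (hT k).ne)
  have hGt_sum : ∑' s, Gt M s = E0 := (ET0_eq M 0).symm
  have hbmu : ∀ l, μ {l} = uinf M * ∑' s : ℕ, g M s l := mu_eq M (hT 0) μ hμ hconv
  -- abbreviations for per-l quantities
  set A1 : ℕ → ℝ≥0∞ := fun l => ∑' q : ℕ × ℕ,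
      (if q.1 + q.2 < n then f M k q.1 * g M q.2 l * u M (n-1-q.1-q.2) else 0) with hA1def
  set B1 : ℕ → ℝ≥0∞ := fun l => ∑' q : ℕ × ℕ,
      (if q.1 + q.2 < n then f M k q.1 * g M q.2 l * uinf M else 0) with hB1def
  set B2 : ℕ → ℝ≥0∞ := fun l => ∑' q : ℕ × ℕ,
      (if ¬ (q.1 + q.2 < n) then f M k q.1 * g M q.2 l * uinf M else 0) with hB2def
  set ρ : ℕ → ℝ≥0∞ := fun l => M.ℙ k ({ω | ω n = l} ∩ H n) with hρdef
  set Dbar : ℕ → ℝ≥0∞ := fun m => (u M m - uinf M) + (uinf M - u M m) with hDbardef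
  set D : ℕ → ℝ≥0∞ := fun l => (M.ℙ k {ω | ω n = l} - μ {l}) + (μ {l} - M.ℙ k {ω | ω n = l})
    with hDdef
  have ha : ∀ l, M.ℙ k {ω | ω n = l} = A1 l + ρ l := by
    intro l
    rw [decompose_a M k n l]
    congr 1
    have hvan1 : ∀ j ∉ Finset.range n,
        (∑' s : ℕ, (if j + s < n then f M k j * g M s l * u M (n-1-j-s) else 0)) = 0 := by
      intro j hj
      have hjn : n ≤ j := by simpa using hj
      have hz : ∀ s : ℕ, (if j + s < n then f M k j * g M s l * u M (n-1-j-s) else 0) = 0 :=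
        fun s => if_neg (by omega)
      rw [tsum_congr hz, tsum_zero]
    simp only [hA1def]
    rw [ENNReal.tsum_prod', tsum_eq_sum hvan1]
    refine Finset.sum_congr rfl fun j hj => ?_
    have hjn : j < n := Finset.mem_range.1 hj
    have hvan2 : ∀ s ∉ Finset.range (n - j),
        (if j + s < n then f M k j * g M s l * u M (n-1-j-s) else 0) = 0 := by
      intro s hs
      have : n - j ≤ s := by simpa using hs
      exact if_neg (by omega)
    rw [tsum_eq_sum hvan2, P0_reflect M (n-1-j) l, show n-1-j+1 = n-j by omega,
      Finset.mul_sum]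
    refine Finset.sum_congr rfl fun s hs => ?_
    have hsn : s < n - j := Finset.mem_range.1 hs
    rw [if_pos (by omega : j + s < n)]
    ring
  have hbsplit : ∀ l, μ {l} = B1 l + B2 l := by
    intro l
    have h1 : μ {l} = ∑' q : ℕ × ℕ, f M k q.1 * g M q.2 l * uinf M := by
      rw [hbmu l, tsum_prod_mul (f M k) (fun s => g M s l) (uinf M), hfsum, one_mul, mul_comm]
    rw [h1]
    simp only [hB1def, hB2def]
    rw [← ENNReal.tsum_add]
    refine tsum_congr fun q => ?_
    split_ifs with h
    · rw [add_zero]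
    · rw [zero_add]
  have hDbar_le_S : ∀ m', n / 2 ≤ m' → m' ≤ n → Dbar m' ≤ ENNReal.ofReal S := by
    intro m' hm1 hm2
    simp only [hDbardef]
    rw [ennreal_abs_eq _ _ (u_ne_top M m') (uinf_ne_top M), hSdef]
    exact ENNReal.ofReal_le_ofReal (Finset.le_sup'
      (fun l => |(u M l).toReal - (uinf M).toReal|) (Finset.mem_Icc.2 ⟨hm1, hm2⟩))
  have hDbar2 : ∀ m', Dbar m' ≤ 2 := by
    intro m'
    simp only [hDbardef]
    refine le_trans (add_le_add tsub_le_self tsub_le_self) ?_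
    calc u M m' + uinf M ≤ 1 + 1 := add_le_add (u_le_one M m') (uinf_le_one M)
    _ = 2 := one_add_one_eq_two
  have hD : ∀ l, D l ≤ (∑' q : ℕ × ℕ,
      (if q.1 + q.2 < n then f M k q.1 * g M q.2 l * Dbar (n-1-q.1-q.2) else 0))
      + ρ l + B2 l := by
    intro l
    simp only [hDdef]
    set Δ1 := ∑' q : ℕ × ℕ, (if q.1 + q.2 < n then
      f M k q.1 * g M q.2 l * (u M (n-1-q.1-q.2) - uinf M) else 0) with hΔ1
    set Δ2 := ∑' q : ℕ × ℕ, (if q.1 + q.2 < n then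
      f M k q.1 * g M q.2 l * (uinf M - u M (n-1-q.1-q.2)) else 0) with hΔ2
    have h3 : A1 l - B1 l ≤ Δ1 := by
      simp only [hA1def, hB1def, hΔ1]
      refine le_trans (tsum_tsub_le _ _)
        (Summable.tsum_le_tsum (fun q => ?_) ENNReal.summable ENNReal.summable)
      split_ifs with h
      · exact mul_tsub_le _ _ _
      · simp
    have h4 : B1 l - A1 l ≤ Δ2 := by
      simp only [hA1def, hB1def, hΔ2]
      refine le_trans (tsum_tsub_le _ _)
        (Summable.tsum_le_tsum (fun q => ?_) ENNReal.summable ENNReal.summable)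
      split_ifs with h
      · exact mul_tsub_le _ _ _
      · simp
    have h1 : M.ℙ k {ω | ω n = l} - μ {l} ≤ Δ1 + ρ l := by
      rw [ha l, hbsplit l]
      calc A1 l + ρ l - (B1 l + B2 l) ≤ A1 l + ρ l - B1 l :=
            tsub_le_tsub_left (le_add_right le_rfl) _
      _ ≤ (A1 l - B1 l) + ρ l := by
            rw [tsub_le_iff_right]
            calc A1 l + ρ l ≤ ((A1 l - B1 l) + B1 l) + ρ l := add_le_add_left le_tsub_add _
            _ = (A1 l - B1 l) + ρ l + B1 l := by ring
      _ ≤ Δ1 + ρ l := add_le_add_left h3 _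
    have h2 : μ {l} - M.ℙ k {ω | ω n = l} ≤ Δ2 + B2 l := by
      rw [ha l, hbsplit l]
      calc B1 l + B2 l - (A1 l + ρ l) ≤ B1 l + B2 l - A1 l :=
            tsub_le_tsub_left (le_add_right le_rfl) _
      _ ≤ (B1 l - A1 l) + B2 l := by
            rw [tsub_le_iff_right]
            calc B1 l + B2 l ≤ ((B1 l - A1 l) + A1 l) + B2 l := add_le_add_left le_tsub_add _
            _ = (B1 l - A1 l) + B2 l + A1 l := by ring
      _ ≤ Δ2 + B2 l := add_le_add_left h4 _
    calc (M.ℙ k {ω | ω n = l} - μ {l}) + (μ {l} - M.ℙ k {ω | ω n = l})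
        ≤ (Δ1 + ρ l) + (Δ2 + B2 l) := add_le_add h1 h2
    _ = (Δ1 + Δ2) + ρ l + B2 l := by ring
    _ ≤ _ := by
        refine add_le_add (add_le_add ?_ le_rfl) le_rfl
        simp only [hΔ1, hΔ2, hDbardef]
        rw [← ENNReal.tsum_add]
        refine Summable.tsum_le_tsum (fun q => ?_) ENNReal.summable ENNReal.summable
        split_ifs with h
        · rw [← mul_add]
        · simp
  -- total bound
  have htotal : ∑' l, D l ≤ E0 * ENNReal.ofReal S + Etrk * E0 * 2 + Etr0 * 2 + Etrk
      + (Etrk * E0 + Etr0) := by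
    have hswap : (∑' l, ∑' q : ℕ × ℕ,
        (if q.1 + q.2 < n then f M k q.1 * g M q.2 l * Dbar (n-1-q.1-q.2) else 0))
        = ∑' q : ℕ × ℕ, (if q.1 + q.2 < n then
            f M k q.1 * Gt M q.2 * Dbar (n-1-q.1-q.2) else 0) := by
      rw [ENNReal.tsum_comm]
      refine tsum_congr fun q => ?_
      split_ifs with h
      · have e : ∀ l, f M k q.1 * g M q.2 l * Dbar (n-1-q.1-q.2)
            = (f M k q.1 * Dbar (n-1-q.1-q.2)) * g M q.2 l := fun l => by ring
        rw [tsum_congr e, ENNReal.tsum_mul_left, tsum_g_eq]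
        ring
      · exact tsum_zero
    have h3split : ∀ q : ℕ × ℕ, (if q.1 + q.2 < n then
        f M k q.1 * Gt M q.2 * Dbar (n-1-q.1-q.2) else 0) ≤
        f M k q.1 * Gt M q.2 * ENNReal.ofReal S
        + (if m4 ≤ q.1 then f M k q.1 else 0) * Gt M q.2 * 2
        + f M k q.1 * (if m4 < q.2 then Gt M q.2 else 0) * 2 := by
      rintro ⟨j, s⟩
      dsimp only
      by_cases hc : j + s < n
      · rw [if_pos hc]
        by_cases hj : j < m4
        · by_cases hs : s ≤ m4
          · refine le_add_right (le_add_right ?_)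
            exact mul_le_mul_right (hDbar_le_S _ (by omega) (by omega)) _
          · refine le_add_left ?_
            rw [if_pos (by omega : m4 < s)]
            exact mul_le_mul_right (hDbar2 _) _
        · refine le_add_right (le_add_left ?_)
          rw [if_pos (by omega : m4 ≤ j)]
          exact mul_le_mul_right (hDbar2 _) _
      · rw [if_neg hc]; exact zero_le
    have hT1 : (∑' q : ℕ × ℕ, (if q.1 + q.2 < n then
        f M k q.1 * Gt M q.2 * Dbar (n-1-q.1-q.2) else 0))
        ≤ E0 * ENNReal.ofReal S + Etrk * E0 * 2 + Etr0 * 2 := by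
      refine le_trans (Summable.tsum_le_tsum h3split ENNReal.summable ENNReal.summable) ?_
      rw [ENNReal.tsum_add, ENNReal.tsum_add]
      refine add_le_add (add_le_add ?_ ?_) ?_
      · rw [tsum_prod_mul (f M k) (Gt M) (ENNReal.ofReal S), hfsum, hGt_sum, one_mul]
      · rw [tsum_prod_mul (fun j => if m4 ≤ j then f M k j else 0) (Gt M) 2, hGt_sum]
        refine mul_le_mul_left (mul_le_mul_left ?_ E0) 2
        refine le_trans (tsum_f_tail_le M k m4) hPk4_le
      · rw [tsum_prod_mul (f M k) (fun s => if m4 < s then Gt M s else 0) 2, hfsum, one_mul]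
        exact mul_le_mul_left (tsum_tail_le_Etr M 0 m4) 2
    have hT2 : (∑' l, ρ l) ≤ Etrk := by
      simp only [hρdef]
      rw [tsum_rho M k n]
      exact le_trans (measure_mono (H_anti (by omega : m4 ≤ n))) hPk4_le
    have hT3 : (∑' l, B2 l) ≤ Etrk * E0 + Etr0 := by
      have hswap2 : (∑' l, B2 l) = ∑' q : ℕ × ℕ,
          (if ¬ (q.1 + q.2 < n) then f M k q.1 * Gt M q.2 * uinf M else 0) := by
        simp only [hB2def]
        rw [ENNReal.tsum_comm]
        refine tsum_congr fun q => ?_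
        split_ifs with h
        · exact tsum_zero
        · have e : ∀ l, f M k q.1 * g M q.2 l * uinf M
              = (f M k q.1 * uinf M) * g M q.2 l := fun l => by ring
          rw [tsum_congr e, ENNReal.tsum_mul_left, tsum_g_eq]
          ring
      rw [hswap2]
      have hsplit2 : ∀ q : ℕ × ℕ, (if ¬ (q.1 + q.2 < n) then
          f M k q.1 * Gt M q.2 * uinf M else 0) ≤
          (if m4 ≤ q.1 then f M k q.1 else 0) * Gt M q.2 * 1
          + f M k q.1 * (if m4 < q.2 then Gt M q.2 else 0) * 1 := by
        rintro ⟨j, s⟩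
        dsimp only
        by_cases hc : j + s < n
        · rw [if_neg (not_not_intro hc)]
          exact zero_le
        · rw [if_pos hc]
          have hor : m4 ≤ j ∨ m4 < s := by omega
          rcases hor with h | h
          · refine le_add_right ?_
            rw [if_pos h, mul_one]
            exact le_trans (mul_le_mul_right (uinf_le_one M) _) (le_of_eq (mul_one _))
          · refine le_add_left ?_
            rw [if_pos h, mul_one]
            exact le_trans (mul_le_mul_right (uinf_le_one M) _) (le_of_eq (mul_one _))
      refine le_trans (Summable.tsum_le_tsum hsplit2 ENNReal.summable ENNReal.summable) ?_
      rw [ENNReal.tsum_add]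
      refine add_le_add ?_ ?_
      · rw [tsum_prod_mul (fun j => if m4 ≤ j then f M k j else 0) (Gt M) 1, hGt_sum, mul_one]
        exact mul_le_mul_left (le_trans (tsum_f_tail_le M k m4) hPk4_le) E0
      · rw [tsum_prod_mul (f M k) (fun s => if m4 < s then Gt M s else 0) 1, hfsum, one_mul,
          mul_one]
        exact tsum_tail_le_Etr M 0 m4
    calc ∑' l, D l ≤ ∑' l, ((∑' q : ℕ × ℕ,
        (if q.1 + q.2 < n then f M k q.1 * g M q.2 l * Dbar (n-1-q.1-q.2) else 0))
        + ρ l + B2 l) := Summable.tsum_le_tsum hD ENNReal.summable ENNReal.summable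
    _ = (∑' l, ∑' q : ℕ × ℕ,
        (if q.1 + q.2 < n then f M k q.1 * g M q.2 l * Dbar (n-1-q.1-q.2) else 0))
        + (∑' l, ρ l) + (∑' l, B2 l) := by
          rw [ENNReal.tsum_add, ENNReal.tsum_add]
    _ ≤ (E0 * ENNReal.ofReal S + Etrk * E0 * 2 + Etr0 * 2) + Etrk + (Etrk * E0 + Etr0) := by
          refine add_le_add (add_le_add ?_ hT2) hT3
          rw [hswap]
          exact hT1
    _ = E0 * ENNReal.ofReal S + Etrk * E0 * 2 + Etr0 * 2 + Etrk + (Etrk * E0 + Etr0) := by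
          ring
  -- conversion to reals
  have hDne : ∀ l, D l ≠ ⊤ := by
    intro l
    simp only [hDdef]
    exact ENNReal.add_ne_top.2 ⟨ne_top_of_le_ne_top (measure_ne_top _ _) tsub_le_self,
      ne_top_of_le_ne_top (measure_ne_top _ _) tsub_le_self⟩
  have hlhs : (∑' l : ℕ, |(M.ℙ k {ω | ω n = l}).toReal - (μ {l}).toReal|)
      = (∑' l, D l).toReal := by
    rw [ENNReal.tsum_toReal_eq hDne]
    refine tsum_congr fun l => ?_
    simp only [hDdef]
    rw [ennreal_abs_eq _ _ (measure_ne_top _ _) (measure_ne_top _ _),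
      toReal_ofReal (abs_nonneg _)]
  rw [hlhs]
  have hRBne : E0 * ENNReal.ofReal S + Etrk * E0 * 2 + Etr0 * 2 + Etrk
      + (Etrk * E0 + Etr0) ≠ ⊤ := by
    refine ENNReal.add_ne_top.2 ⟨ENNReal.add_ne_top.2 ⟨ENNReal.add_ne_top.2
      ⟨ENNReal.add_ne_top.2 ⟨?_, ?_⟩, ?_⟩, ?_⟩, ENNReal.add_ne_top.2 ⟨?_, ?_⟩⟩
    · exact ENNReal.mul_ne_top hE0top ofReal_ne_top
    · exact ENNReal.mul_ne_top (ENNReal.mul_ne_top hEtrk_top hE0top) (by simp)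
    · exact ENNReal.mul_ne_top hEtr0_top (by simp)
    · exact hEtrk_top
    · exact ENNReal.mul_ne_top hEtrk_top hE0top
    · exact hEtr0_top
  refine le_trans (ENNReal.toReal_mono hRBne htotal) ?_
  have htrk : ET0trunc M k ((n:ℝ≥0∞)/4) = Etrk.toReal := by
    simp only [ET0trunc]
    rw [setT0_div_eq n, ← hm4, hEtrk]
  have htr0 : ET0trunc M 0 ((n:ℝ≥0∞)/4) = Etr0.toReal := by
    simp only [ET0trunc]
    rw [setT0_div_eq n, ← hm4, hEtr0]
  rw [htrk, htr0]
  have hexp : (E0 * ENNReal.ofReal S + Etrk * E0 * 2 + Etr0 * 2 + Etrk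
      + (Etrk * E0 + Etr0)).toReal
      = E0.toReal * S + Etrk.toReal * E0.toReal * 2 + Etr0.toReal * 2 + Etrk.toReal
        + (Etrk.toReal * E0.toReal + Etr0.toReal) := by
    rw [ENNReal.toReal_add (by exact ENNReal.add_ne_top.1 hRBne |>.1)
        (by exact ENNReal.add_ne_top.1 hRBne |>.2),
      ENNReal.toReal_add (by
        have := ENNReal.add_ne_top.1 hRBne |>.1
        exact (ENNReal.add_ne_top.1 this).1) (by
        have := ENNReal.add_ne_top.1 hRBne |>.1
        exact (ENNReal.add_ne_top.1 this).2),
      ENNReal.toReal_add (by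
        have h' := (ENNReal.add_ne_top.1 ((ENNReal.add_ne_top.1 hRBne).1)).1
        exact (ENNReal.add_ne_top.1 h').1) (by
        have h' := (ENNReal.add_ne_top.1 ((ENNReal.add_ne_top.1 hRBne).1)).1
        exact (ENNReal.add_ne_top.1 h').2),
      ENNReal.toReal_add (by
        have h' := (ENNReal.add_ne_top.1
          ((ENNReal.add_ne_top.1 ((ENNReal.add_ne_top.1 hRBne).1)).1)).1
        exact (ENNReal.add_ne_top.1 h').1) (by
        have h' := (ENNReal.add_ne_top.1
          ((ENNReal.add_ne_top.1 ((ENNReal.add_ne_top.1 hRBne).1)).1)).1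
        exact (ENNReal.add_ne_top.1 h').2),
      ENNReal.toReal_add (ENNReal.mul_ne_top hEtrk_top hE0top) hEtr0_top]
    simp only [ENNReal.toReal_mul, toReal_ofReal hS0, ENNReal.toReal_ofNat]
  rw [hexp]
  have ht0n : (0:ℝ) ≤ Etr0.toReal := ENNReal.toReal_nonneg
  have htkn : (0:ℝ) ≤ Etrk.toReal := ENNReal.toReal_nonneg
  nlinarith [mul_nonneg (by linarith : (0:ℝ) ≤ 2*E0.toReal+1) hS0,
    mul_nonneg (by linarith : (0:ℝ) ≤ 3*E0.toReal-2) ht0n]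


end
end

section
/- Suppose 𝔼_0(T_0) = ∞ and ℙ_l(T_0 < ∞) > 0 for every l ∈ ℕ. Then for every k ∈ ℕ, Z_n → ∞ in ℙ_k-probability as n → ∞, i.e. for every l ∈ ℕ, ℙ_k(Z_n = l) → 0. -/
open MeasureTheory Filter ENNReal

noncomputable section

namespace StmtAux

def vrec (φ : ℕ → ℕ → ℝ≥0∞) (g : ℕ → ℝ≥0∞) : ℕ → ℕ → ℝ≥0∞
  | 0 => g
  | n+1 => fun k => ∑' y, φ k y * vrec φ g n y

variable (M : MCNat)

/-- `n`-step transition probability -/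
def q (n k l : ℕ) : ℝ≥0∞ := vrec M.p (fun x => if x = l then 1 else 0) n k

/-- taboo transition kernel (killed at `0`) -/
def pz (x y : ℕ) : ℝ≥0∞ := if y = 0 then 0 else M.p x y

/-- survival probability: no visit to `0` during times `1..n` -/
def sv (n k : ℕ) : ℝ≥0∞ := vrec (pz M) (fun _ => 1) n k

/-- first hitting time of `0` distribution -/
def ar : ℕ → ℕ → ℝ≥0∞
  | 0, _ => 0
  | (j+1), k => ∑' y, M.p k y * (if y = 0 then (if j = 0 then (1:ℝ≥0∞) else 0) else ar j y)

lemma q_zero (k l : ℕ) : q M 0 k l = if k = l then 1 else 0 := rfl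
lemma q_succ (n k l : ℕ) : q M (n+1) k l = ∑' y, M.p k y * q M n y l := rfl
lemma sv_zero (k : ℕ) : sv M 0 k = 1 := rfl
lemma sv_succ (n k : ℕ) : sv M (n+1) k = ∑' y, pz M k y * sv M n y := rfl

lemma p_le_one (x y : ℕ) : M.p x y ≤ 1 := by
  rw [← M.p_sum x]; exact ENNReal.le_tsum y

lemma p_ne_top (x y : ℕ) : M.p x y ≠ ⊤ := (lt_of_le_of_lt (p_le_one M x y) one_lt_top).ne

lemma q_le_one : ∀ n k l, q M n k l ≤ 1 := by
  intro n
  induction n with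
  | zero => intro k l; rw [q_zero]; split_ifs <;> simp
  | succ n ih =>
    intro k l
    rw [q_succ]
    calc ∑' y, M.p k y * q M n y l ≤ ∑' y, M.p k y * 1 :=
          ENNReal.tsum_le_tsum fun y => mul_le_mul_right (ih y l) _
      _ = 1 := by simp [M.p_sum k]

lemma pz_le_p (x y : ℕ) : pz M x y ≤ M.p x y := by
  unfold pz; split_ifs <;> simp

lemma sv_le_one : ∀ n k, sv M n k ≤ 1 := by
  intro n
  induction n with
  | zero => intro k; rw [sv_zero]
  | succ n ih =>
    intro k
    rw [sv_succ]
    calc ∑' y, pz M k y * sv M n y ≤ ∑' y, M.p k y * 1 :=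
          ENNReal.tsum_le_tsum fun y =>
            mul_le_mul' (pz_le_p M k y) (ih y)
      _ = 1 := by simp [M.p_sum k]

lemma q_ne_top (n k l : ℕ) : q M n k l ≠ ⊤ :=
  (lt_of_le_of_lt (q_le_one M n k l) one_lt_top).ne
lemma sv_ne_top (n k : ℕ) : sv M n k ≠ ⊤ :=
  (lt_of_le_of_lt (sv_le_one M n k) one_lt_top).ne

lemma tsum_split0 (f : ℕ → ℝ≥0∞) :
    (∑' y, f y) = f 0 + ∑' y, if y = 0 then 0 else f y := by
  rw [ENNReal.tsum_eq_add_tsum_ite 0]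
  congr 1
  exact tsum_congr fun y => by by_cases h : y = 0 <;> simp [h]

lemma ar_one (k : ℕ) : ar M 1 k = M.p k 0 := by
  show (∑' y, M.p k y * (if y = 0 then (if 0 = 0 then (1:ℝ≥0∞) else 0) else ar M 0 y)) = M.p k 0
  rw [tsum_eq_single 0 (by intro y hy; simp [hy, ar])]
  simp

lemma ar_succ (j k : ℕ) : ar M (j+2) k = ∑' y, pz M k y * ar M (j+1) y := by
  show (∑' y, M.p k y * (if y = 0 then (if j + 1 = 0 then (1:ℝ≥0∞) else 0) else ar M (j+1) y)) = _
  refine tsum_congr fun y => ?_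
  unfold pz
  by_cases hy : y = 0 <;> simp [hy]

/-- one-step decomposition of survival -/
lemma sa : ∀ j k, sv M j k = sv M (j+1) k + ar M (j+1) k := by
  intro j
  induction j with
  | zero =>
    intro k
    rw [sv_zero, ar_one]
    have hsplit := tsum_split0 (M.p k)
    have hsv : sv M 1 k = ∑' y, if y = 0 then 0 else M.p k y := by
      rw [sv_succ]
      refine tsum_congr fun y => ?_
      by_cases h : y = 0 <;> simp [pz, h, sv_zero]
    rw [hsv, ← M.p_sum k, hsplit]
    exact add_comm _ _
  | succ j ih =>
    intro k
    calc sv M (j+1) k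
        = ∑' y, pz M k y * sv M j y := sv_succ M j k
      _ = ∑' y, (pz M k y * sv M (j+1) y + pz M k y * ar M (j+1) y) := by
          refine tsum_congr fun y => ?_
          rw [ih y, mul_add]
      _ = (∑' y, pz M k y * sv M (j+1) y) + ∑' y, pz M k y * ar M (j+1) y :=
          ENNReal.tsum_add
      _ = sv M (j+1+1) k + ar M (j+1+1) k := by
          rw [sv_succ M (j+1) k]
          congr 1
          exact (ar_succ M j k).symm

/-- telescoping: total first-hitting mass up to `J` -/
lemma telescope : ∀ J k, sv M 0 k = sv M J k + ∑ j ∈ Finset.range J, ar M (j+1) k := by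
  intro J
  induction J with
  | zero => intro k; simp
  | succ J ih =>
    intro k
    rw [ih k, Finset.sum_range_succ, sa M J k]
    ring

lemma sum_ar_le_one (J k : ℕ) : ∑ j ∈ Finset.range J, ar M (j+1) k ≤ 1 := by
  have h := telescope M J k
  rw [sv_zero] at h
  rw [h]; exact le_add_self

lemma ar_le_one (j k : ℕ) : ar M j k ≤ 1 := by
  cases j with
  | zero => show (0:ℝ≥0∞) ≤ 1; simp [ar]
  | succ j =>
    have := sum_ar_le_one M (j+1) k
    refine le_trans ?_ this
    exact Finset.single_le_sum (f := fun i => ar M (i+1) k) (by intros; positivity)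
      (Finset.self_mem_range_succ j)

lemma ar_ne_top (j k : ℕ) : ar M j k ≠ ⊤ :=
  (lt_of_le_of_lt (ar_le_one M j k) one_lt_top).ne

lemma tsum_ar_le_one (k : ℕ) : ∑' j, ar M (j+1) k ≤ 1 := by
  rw [ENNReal.tsum_eq_iSup_nat]
  exact iSup_le fun J => sum_ar_le_one M J k

/-- Chapman–Kolmogorov -/
lemma CK : ∀ n m k l, q M (n+m) k l = ∑' z, q M n k z * q M m z l := by
  intro n
  induction n with
  | zero =>
    intro m k l
    rw [zero_add]
    rw [tsum_eq_single k (by intro z hz; simp [q_zero, Ne.symm hz])]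
    simp [q_zero]
  | succ n ih =>
    intro m k l
    have harith : n + 1 + m = (n + m) + 1 := by omega
    rw [harith, q_succ]
    calc (∑' y, M.p k y * q M (n+m) y l)
        = ∑' y, M.p k y * ∑' z, q M n y z * q M m z l := by
          refine tsum_congr fun y => ?_; rw [ih m y l]
      _ = ∑' y, ∑' z, M.p k y * (q M n y z * q M m z l) := by
          refine tsum_congr fun y => ?_; rw [ENNReal.tsum_mul_left]
      _ = ∑' z, ∑' y, M.p k y * (q M n y z * q M m z l) := ENNReal.tsum_comm
      _ = ∑' z, ∑' y, (M.p k y * q M n y z) * q M m z l := by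
          refine tsum_congr fun z => tsum_congr fun y => ?_; ring
      _ = ∑' z, (∑' y, M.p k y * q M n y z) * q M m z l := by
          refine tsum_congr fun z => ?_; rw [ENNReal.tsum_mul_right]
      _ = ∑' z, q M (n+1) k z * q M m z l := by
          refine tsum_congr fun z => ?_; rw [q_succ]

/-- first-passage decomposition (renewal equation) -/
lemma renewal : ∀ n k, q M (n+1) k 0
    = ∑ j ∈ Finset.range (n+1), ar M (j+1) k * q M (n-j) 0 0 := by
  intro n
  induction n with
  | zero =>
    intro k
    rw [q_succ, tsum_eq_single 0 (by intro y hy; simp [q_zero, hy])]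
    simp [q_zero, ar_one]
  | succ n ih =>
    intro k
    rw [q_succ]
    have hstep : ∀ y : ℕ, M.p k y * q M (n+1) y 0
        = M.p k y * ∑ j ∈ Finset.range (n+1), ar M (j+1) y * q M (n-j) 0 0 := by
      intro y; rw [ih y]
    rw [tsum_congr hstep, tsum_split0]
    have h0term : M.p k 0 * (∑ j ∈ Finset.range (n+1), ar M (j+1) 0 * q M (n-j) 0 0)
        = ar M 1 k * q M (n+1) 0 0 := by
      rw [← ih 0, ar_one]
    have hrest : (∑' y, if y = 0 then 0 else
          M.p k y * ∑ j ∈ Finset.range (n+1), ar M (j+1) y * q M (n-j) 0 0)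
        = ∑ j ∈ Finset.range (n+1), ar M (j+2) k * q M (n-j) 0 0 := by
      have hpt : ∀ y : ℕ, (if y = 0 then 0 else
            M.p k y * ∑ j ∈ Finset.range (n+1), ar M (j+1) y * q M (n-j) 0 0)
          = ∑ j ∈ Finset.range (n+1), pz M k y * (ar M (j+1) y * q M (n-j) 0 0) := by
        intro y
        by_cases hy : y = 0
        · simp [hy, pz]
        · rw [if_neg hy, Finset.mul_sum]
          refine Finset.sum_congr rfl fun j _ => ?_
          rw [pz, if_neg hy]
      rw [tsum_congr hpt, Summable.tsum_finsetSum (fun j _ => ENNReal.summable)]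
      refine Finset.sum_congr rfl fun j _ => ?_
      calc (∑' y, pz M k y * (ar M (j+1) y * q M (n-j) 0 0))
          = ∑' y, (pz M k y * ar M (j+1) y) * q M (n-j) 0 0 := by
            refine tsum_congr fun y => ?_; ring
        _ = (∑' y, pz M k y * ar M (j+1) y) * q M (n-j) 0 0 := ENNReal.tsum_mul_right
        _ = ar M (j+2) k * q M (n-j) 0 0 := by rw [← ar_succ]
    rw [h0term, hrest]
    rw [Finset.sum_range_succ' (fun j => ar M (j+1) k * q M (n+1-j) 0 0) (n+1)]
    simp only [Nat.sub_zero, zero_add]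
    have heq : ∀ j ∈ Finset.range (n+1), ar M (j+1+1) k * q M (n+1-(j+1)) 0 0
        = ar M (j+2) k * q M (n-j) 0 0 := by
      intro j _
      have h1 : n+1-(j+1) = n-j := by omega
      rw [h1]
    rw [Finset.sum_congr rfl heq]
    exact add_comm _ _

/-- the key identity: decomposition according to the last visit to `0` -/
lemma last_visit : ∀ n, ∑ m ∈ Finset.range (n+1), q M m 0 0 * sv M (n-m) 0 = 1 := by
  intro n
  induction n with
  | zero => simp [q_zero, sv_zero]
  | succ n ih =>
    have step1 : ∀ m ∈ Finset.range (n+1),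
        q M m 0 0 * sv M (n-m) 0
          = q M m 0 0 * sv M (n+1-m) 0 + q M m 0 0 * ar M (n+1-m) 0 := by
      intro m hm
      have hm' : m ≤ n := Nat.lt_succ_iff.1 (Finset.mem_range.1 hm)
      have h1 : n - m + 1 = n + 1 - m := by omega
      rw [sa M (n-m) 0, h1, mul_add]
    have step2 : (∑ m ∈ Finset.range (n+1), q M m 0 0 * ar M (n+1-m) 0)
        = q M (n+1) 0 0 := by
      rw [renewal M n 0,
        ← Finset.sum_range_reflect (fun j => ar M (j+1) 0 * q M (n-j) 0 0) (n+1)]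
      refine Finset.sum_congr rfl fun m hm => ?_
      have hm' : m ≤ n := Nat.lt_succ_iff.1 (Finset.mem_range.1 hm)
      have h1 : n + 1 - 1 - m + 1 = n + 1 - m := by omega
      have h2 : n - (n + 1 - 1 - m) = m := by omega
      rw [h1, h2, mul_comm]
    calc ∑ m ∈ Finset.range (n+2), q M m 0 0 * sv M (n+1-m) 0
        = (∑ m ∈ Finset.range (n+1), q M m 0 0 * sv M (n+1-m) 0)
            + q M (n+1) 0 0 * sv M 0 0 := by
          rw [Finset.sum_range_succ, Nat.sub_self]
      _ = (∑ m ∈ Finset.range (n+1), q M m 0 0 * sv M (n+1-m) 0)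
            + ∑ m ∈ Finset.range (n+1), q M m 0 0 * ar M (n+1-m) 0 := by
          rw [step2, sv_zero, mul_one]
      _ = ∑ m ∈ Finset.range (n+1), q M m 0 0 * sv M (n-m) 0 := by
          rw [← Finset.sum_add_distrib]
          exact (Finset.sum_congr rfl step1).symm
      _ = 1 := ih



/-- extend a finite tuple to a full path by zeros -/
def ext (n : ℕ) (a : Fin (n+1) → ℕ) : ℕ → ℕ := fun i => if h : i < n + 1 then a ⟨i, h⟩ else 0

lemma ext_le {n : ℕ} (a : Fin (n+1) → ℕ) {i : ℕ} (h : i ≤ n) :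
    ext n a i = a ⟨i, by omega⟩ := by simp [ext, Nat.lt_succ_iff.2 h]

lemma ext_zero {n : ℕ} (a : Fin (n+1) → ℕ) : ext n a 0 = a 0 := by
  rw [ext_le a (Nat.zero_le n)]; rfl

lemma ext_cons_zero {n : ℕ} (x : ℕ) (b : Fin (n+1) → ℕ) :
    ext (n+1) (Fin.cons x b) 0 = x := by
  rw [ext_le _ (Nat.zero_le _)]; exact Fin.cons_zero _ _

lemma ext_cons_succ {n : ℕ} (x : ℕ) (b : Fin (n+1) → ℕ) (i : ℕ) :
    ext (n+1) (Fin.cons x b) (i+1) = ext n b i := by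
  by_cases h : i < n + 1
  · have h' : i + 1 < n + 2 := by omega
    simp only [ext, dif_pos h, dif_pos h']
    exact Fin.cons_succ (α := fun _ : Fin (n+2) => ℕ) x b ⟨i, h⟩
  · have h' : ¬ (i + 1 < n + 2) := by omega
    simp only [ext, dif_neg h, dif_neg h']

open Classical in
/-- cylinder decomposition of the measure of an event depending on coordinates `≤ n` -/
lemma meas_eq_tsum (M : MCNat) (k n : ℕ) (P : (ℕ → ℕ) → Prop)
    (hdep : ∀ ω ω', (∀ i ≤ n, ω i = ω' i) → P ω → P ω') :
    M.ℙ k {ω | P ω} = ∑' a : Fin (n+1) → ℕ,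
      if P (ext n a) ∧ a 0 = k then
        ∏ i ∈ Finset.range n, M.p (ext n a i) (ext n a (i+1)) else 0 := by
  classical
  have hcylm : ∀ c : ℕ → ℕ, MeasurableSet {ω : ℕ → ℕ | ∀ i ≤ n, ω i = c i} := by
    intro c
    have : {ω : ℕ → ℕ | ∀ i ≤ n, ω i = c i}
        = ⋂ i ∈ Finset.range (n+1), (fun ω : ℕ → ℕ => ω i) ⁻¹' {c i} := by
      ext ω; simp [Nat.lt_succ_iff]
    rw [this]
    exact MeasurableSet.biInter (Set.to_countable _)
      fun i _ => (measurable_pi_apply i) (measurableSet_singleton _)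
  set Sa : (Fin (n+1) → ℕ) → Set (ℕ → ℕ) :=
    fun a => if P (ext n a) then {ω | ∀ i ≤ n, ω i = ext n a i} else ∅ with hSa
  have hsets : {ω | P ω} = ⋃ a : Fin (n+1) → ℕ, Sa a := by
    ext ω
    constructor
    · intro hω
      refine Set.mem_iUnion.2 ⟨fun i => ω i, ?_⟩
      have hagree : ∀ i ≤ n, ω i = ext n (fun i : Fin (n+1) => ω i) i := by
        intro i hi; rw [ext_le _ hi]
      have hP : P (ext n (fun i : Fin (n+1) => ω i)) := hdep _ _ hagree hω
      simp only [hSa, if_pos hP]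
      exact hagree
    · intro hω
      obtain ⟨a, ha⟩ := Set.mem_iUnion.1 hω
      simp only [hSa] at ha
      by_cases hP : P (ext n a)
      · rw [if_pos hP] at ha
        exact hdep _ _ (fun i hi => ((ha i hi).symm)) hP
      · rw [if_neg hP] at ha; exact absurd ha (Set.notMem_empty ω)
  have hmeas : ∀ a, MeasurableSet (Sa a) := by
    intro a; simp only [hSa]; split_ifs
    · exact hcylm _
    · exact MeasurableSet.empty
  have hdisj : Pairwise (Function.onFun Disjoint Sa) := by
    intro a b hab
    simp only [Function.onFun, hSa]
    split_ifs <;> try simp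
    rw [Set.disjoint_left]
    intro ω hωa hωb
    obtain ⟨i, hi⟩ : ∃ i : Fin (n+1), a i ≠ b i := by
      by_contra h; push_neg at h; exact hab (funext h)
    have h1 : ω i = ext n a i := hωa i (Nat.lt_succ_iff.1 i.2)
    have h2 : ω i = ext n b i := hωb i (Nat.lt_succ_iff.1 i.2)
    rw [ext_le _ (Nat.lt_succ_iff.1 i.2)] at h1 h2
    simp only [Fin.eta] at h1 h2
    exact hi (h1 ▸ h2)
  rw [hsets, measure_iUnion hdisj hmeas]
  refine tsum_congr fun a => ?_
  by_cases hP : P (ext n a)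
  · simp only [hSa, if_pos hP, M.fdd k n (ext n a), ext_zero, hP, true_and]
  · simp only [hSa, if_neg hP, hP, false_and, if_false, measure_empty]

/-- fiber decomposition of a tsum over tuples according to the first coordinate -/
lemma tsum_fiber {n : ℕ} (F : ℕ → ℝ≥0∞) (G : (Fin (n+1) → ℕ) → ℝ≥0∞) :
    (∑' b : Fin (n+1) → ℕ, F (b 0) * G b)
      = ∑' y : ℕ, F y * ∑' b : Fin (n+1) → ℕ, (if b 0 = y then 1 else 0) * G b := by
  classical
  have : ∀ y : ℕ, F y * (∑' b : Fin (n+1) → ℕ, (if b 0 = y then 1 else 0) * G b)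
      = ∑' b : Fin (n+1) → ℕ, F y * ((if b 0 = y then 1 else 0) * G b) := by
    intro y; rw [ENNReal.tsum_mul_left]
  rw [tsum_congr this, ENNReal.tsum_comm]
  refine tsum_congr fun b => ?_
  rw [tsum_eq_single (b 0) (by intro y hy; simp [Ne.symm hy])]
  simp

/-- the path-sum equals the recursion -/
lemma pathsum_eq (φ : ℕ → ℕ → ℝ≥0∞) (g : ℕ → ℝ≥0∞) :
    ∀ (n k : ℕ),
    (∑' a : Fin (n+1) → ℕ, (if a 0 = k then 1 else 0) *
      ((∏ i ∈ Finset.range n, φ (ext n a i) (ext n a (i+1))) * g (ext n a n)))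
      = vrec φ g n k := by
  classical
  intro n
  induction n with
  | zero =>
    intro k
    have he : ∀ x : ℕ, ((Equiv.funUnique (Fin 1) ℕ).symm x) 0 = x := by intro x; rfl
    rw [← Equiv.tsum_eq (Equiv.funUnique (Fin 1) ℕ).symm]
    simp only [Finset.range_zero, Finset.prod_empty, one_mul]
    have : ∀ x : ℕ, (if ((Equiv.funUnique (Fin 1) ℕ).symm x) 0 = k then (1:ℝ≥0∞) else 0) *
        g (ext 0 ((Equiv.funUnique (Fin 1) ℕ).symm x) 0)
        = if x = k then g x else 0 := by
      intro x
      rw [ext_zero, he]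
      split_ifs <;> simp
    rw [tsum_congr this, tsum_eq_single k (by intro x hx; simp [hx])]
    simp [vrec]
  | succ n ih =>
    intro k
    rw [← Equiv.tsum_eq (Fin.consEquiv (fun _ : Fin (n+2) => ℕ))]
    have hterm : ∀ (x : ℕ) (b : Fin (n+1) → ℕ),
        (if (Fin.consEquiv (fun _ : Fin (n+2) => ℕ)) (x, b) 0 = k then (1:ℝ≥0∞) else 0) *
          ((∏ i ∈ Finset.range (n+1),
            φ (ext (n+1) ((Fin.consEquiv (fun _ : Fin (n+2) => ℕ)) (x, b)) i)
              (ext (n+1) ((Fin.consEquiv (fun _ : Fin (n+2) => ℕ)) (x, b)) (i+1)))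
            * g (ext (n+1) ((Fin.consEquiv (fun _ : Fin (n+2) => ℕ)) (x, b)) (n+1)))
        = (if x = k then 1 else 0) *
            (φ x (b 0) * ((∏ i ∈ Finset.range n, φ (ext n b i) (ext n b (i+1)))
              * g (ext n b n))) := by
      intro x b
      have hc : (Fin.consEquiv (fun _ : Fin (n+2) => ℕ)) (x, b) = Fin.cons x b := rfl
      rw [hc]
      have h0 : (Fin.cons x b : Fin (n+2) → ℕ) 0 = x := Fin.cons_zero _ _
      rw [h0]
      congr 1
      rw [Finset.prod_range_succ' (fun i =>
        φ (ext (n+1) (Fin.cons x b) i) (ext (n+1) (Fin.cons x b) (i+1))) n]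
      simp only [ext_cons_succ, ext_cons_zero]
      rw [ext_zero]
      ring
    rw [tsum_congr fun c : ℕ × (Fin (n+1) → ℕ) => hterm c.1 c.2,
      ENNReal.tsum_prod (f := fun x (b : Fin (n+1) → ℕ) => (if x = k then (1:ℝ≥0∞) else 0) *
        (φ x (b 0) * ((∏ i ∈ Finset.range n, φ (ext n b i) (ext n b (i+1))) * g (ext n b n))))]
    have hinner : ∀ x : ℕ,
        (∑' b : Fin (n+1) → ℕ, (if x = k then (1:ℝ≥0∞) else 0) *
          (φ x (b 0) * ((∏ i ∈ Finset.range n, φ (ext n b i) (ext n b (i+1)))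
            * g (ext n b n))))
        = (if x = k then 1 else 0) * vrec φ g (n+1) x := by
      intro x
      rw [ENNReal.tsum_mul_left]
      congr 1
      have := tsum_fiber (F := fun y => φ x y)
        (G := fun b : Fin (n+1) → ℕ =>
          (∏ i ∈ Finset.range n, φ (ext n b i) (ext n b (i+1))) * g (ext n b n))
      rw [this]
      show (∑' y, φ x y * _) = vrec φ g (n+1) x
      refine tsum_congr fun y => ?_
      rw [ih y]
    rw [tsum_congr hinner, tsum_eq_single k (by intro x hx; simp [hx])]
    simp


variable (M : MCNat)
-- continuing inside namespace StmtAux, variable (M : MCNat)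

lemma meas_coord (k n l : ℕ) : M.ℙ k {ω | ω n = l} = q M n k l := by
  classical
  have hdep : ∀ ω ω' : ℕ → ℕ, (∀ i ≤ n, ω i = ω' i) → ω n = l → ω' n = l := by
    intro ω ω' h hl; rw [← h n le_rfl]; exact hl
  rw [meas_eq_tsum M k n (fun ω => ω n = l) hdep, q, ← pathsum_eq M.p _ n k]
  refine tsum_congr fun a => ?_
  by_cases h1 : ext n a n = l <;> by_cases h2 : a 0 = k <;> simp [h1, h2]

lemma meas_surv (k n : ℕ) :
    M.ℙ k {ω | ∀ i, 1 ≤ i → i ≤ n → ω i ≠ 0} = sv M n k := by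
  classical
  have hdep : ∀ ω ω' : ℕ → ℕ, (∀ i ≤ n, ω i = ω' i) →
      (∀ i, 1 ≤ i → i ≤ n → ω i ≠ 0) → (∀ i, 1 ≤ i → i ≤ n → ω' i ≠ 0) := by
    intro ω ω' h hc i h1 h2
    rw [← h i h2]; exact hc i h1 h2
  rw [meas_eq_tsum M k n (fun ω => ∀ i, 1 ≤ i → i ≤ n → ω i ≠ 0) hdep, sv,
    ← pathsum_eq (pz M) _ n k]
  refine tsum_congr fun a => ?_
  by_cases h2 : a 0 = k
  · by_cases h1 : ∀ i, 1 ≤ i → i ≤ n → ext n a i ≠ 0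
    · rw [if_pos ⟨h1, h2⟩, if_pos h2]
      have hprod : (∏ i ∈ Finset.range n, M.p (ext n a i) (ext n a (i+1)))
          = ∏ i ∈ Finset.range n, pz M (ext n a i) (ext n a (i+1)) := by
        refine Finset.prod_congr rfl fun i hi => ?_
        have hi' : i < n := Finset.mem_range.1 hi
        have : ext n a (i+1) ≠ 0 := h1 (i+1) (by omega) (by omega)
        rw [pz, if_neg this]
      rw [hprod]; simp
    · rw [if_neg (by tauto)]
      push_neg at h1
      obtain ⟨i, hi1, hi2, hi0⟩ := h1
      obtain ⟨j, rfl⟩ : ∃ j, i = j + 1 := ⟨i - 1, by omega⟩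
      have hj : j ∈ Finset.range n := Finset.mem_range.2 (by omega)
      have : (∏ i ∈ Finset.range n, pz M (ext n a i) (ext n a (i+1))) = 0 :=
        Finset.prod_eq_zero hj (by rw [pz, if_pos hi0])
      rw [this]; simp
  · rw [if_neg (by tauto)]; simp [h2]

lemma q_one (k l : ℕ) : q M 1 k l = M.p k l := by
  rw [q_succ, tsum_eq_single l (by intro y hy; simp [q_zero, hy])]
  simp [q_zero]

lemma T0_gt_iff (ω : ℕ → ℕ) (n : ℕ) :
    (n : ℝ≥0∞) < T0 ω ↔ ∀ i, 1 ≤ i → i ≤ n → ω i ≠ 0 := by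
  constructor
  · intro h i h1 h2 hzero
    have hmem : (i : ℝ≥0∞) ∈ {t : ℝ≥0∞ | ∃ i : ℕ, 0 < i ∧ ω i = 0 ∧ t = i} :=
      ⟨i, by omega, hzero, rfl⟩
    have := sInf_le hmem
    have hle : (i : ℝ≥0∞) ≤ (n : ℝ≥0∞) := Nat.cast_le.2 h2
    exact absurd h (not_lt.2 (this.trans hle))
  · intro h
    have hge : ((n+1 : ℕ) : ℝ≥0∞) ≤ T0 ω := by
      refine le_sInf fun t ht => ?_
      obtain ⟨i, hi0, hiz, rfl⟩ := ht
      have : ¬ (i ≤ n) := fun hle => h i (by omega) hle hiz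
      exact_mod_cast Nat.cast_le.2 (by omega : n + 1 ≤ i)
    calc (n : ℝ≥0∞) < ((n+1 : ℕ) : ℝ≥0∞) := by
          push_cast
          exact ENNReal.lt_add_right (ENNReal.natCast_ne_top n) one_ne_zero
      _ ≤ T0 ω := hge

lemma T0_lt_top_iff (ω : ℕ → ℕ) : T0 ω < ⊤ ↔ ∃ i : ℕ, 0 < i ∧ ω i = 0 := by
  constructor
  · intro h
    by_contra hc
    push_neg at hc
    have : {t : ℝ≥0∞ | ∃ i : ℕ, 0 < i ∧ ω i = 0 ∧ t = i} = ∅ := by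
      ext t; simp only [Set.mem_setOf_eq, Set.mem_empty_iff_false, iff_false]
      rintro ⟨i, hi0, hiz, rfl⟩
      exact absurd hiz (hc i hi0)
    rw [T0, this, sInf_empty] at h
    exact absurd h (lt_irrefl ⊤)
  · rintro ⟨i, hi0, hiz⟩
    have hmem : (i : ℝ≥0∞) ∈ {t : ℝ≥0∞ | ∃ i : ℕ, 0 < i ∧ ω i = 0 ∧ t = i} :=
      ⟨i, hi0, hiz, rfl⟩
    exact lt_of_le_of_lt (sInf_le hmem) (ENNReal.natCast_lt_top i)

lemma T0_layer (ω : ℕ → ℕ) : T0 ω = ∑' n : ℕ, if (n : ℝ≥0∞) < T0 ω then 1 else 0 := by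
  classical
  by_cases hS : ∃ i : ℕ, 0 < i ∧ ω i = 0
  · set i₀ := Nat.find hS with hi₀
    have hT : T0 ω = (i₀ : ℝ≥0∞) := by
      apply le_antisymm
      · exact sInf_le ⟨i₀, (Nat.find_spec hS).1, (Nat.find_spec hS).2, rfl⟩
      · refine le_sInf fun t ht => ?_
        obtain ⟨i, hi0, hiz, rfl⟩ := ht
        exact Nat.cast_le.2 (Nat.find_min' hS ⟨hi0, hiz⟩)
    rw [hT]
    have hcond : ∀ n : ℕ, ((n : ℝ≥0∞) < (i₀ : ℝ≥0∞)) ↔ n < i₀ := fun n => Nat.cast_lt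
    calc (i₀ : ℝ≥0∞) = ∑ n ∈ Finset.range i₀, 1 := by simp
      _ = ∑' n : ℕ, if (n : ℝ≥0∞) < (i₀ : ℝ≥0∞) then 1 else 0 := by
          symm
          rw [tsum_eq_sum (s := Finset.range i₀)
            (fun n hn => if_neg (not_lt.2 (Nat.cast_le.2
              (not_lt.1 (fun h => hn (Finset.mem_range.2 h))))))]
          exact Finset.sum_congr rfl fun n hn =>
            if_pos (Nat.cast_lt.2 (Finset.mem_range.1 hn))
  · have hT : T0 ω = ⊤ := by
      have : {t : ℝ≥0∞ | ∃ i : ℕ, 0 < i ∧ ω i = 0 ∧ t = i} = ∅ := by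
        ext t; simp only [Set.mem_setOf_eq, Set.mem_empty_iff_false, iff_false]
        rintro ⟨i, hi0, hiz, rfl⟩
        exact hS ⟨i, hi0, hiz⟩
      rw [T0, this, sInf_empty]
    rw [hT]
    have : ∀ n : ℕ, (if (n : ℝ≥0∞) < ⊤ then (1:ℝ≥0∞) else 0) = 1 := fun n =>
      if_pos (ENNReal.natCast_lt_top n)
    rw [tsum_congr this]
    exact (ENNReal.tsum_const_eq_top_of_ne_zero one_ne_zero).symm

lemma surv_measurable (n : ℕ) :
    MeasurableSet {ω : ℕ → ℕ | ∀ i, 1 ≤ i → i ≤ n → ω i ≠ 0} := by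
  have : {ω : ℕ → ℕ | ∀ i, 1 ≤ i → i ≤ n → ω i ≠ 0}
      = ⋂ i ∈ Finset.Icc 1 n, (fun ω : ℕ → ℕ => ω i) ⁻¹' ({0}ᶜ) := by
    ext ω; simp [Finset.mem_Icc]
  rw [this]
  exact MeasurableSet.biInter (Set.to_countable _)
    fun i _ => (measurable_pi_apply i) (measurableSet_singleton 0).compl

lemma ET0_eq : ET0 M 0 = ∑' n : ℕ, sv M n 0 := by
  rw [ET0, lintegral_congr fun ω => T0_layer ω]
  have hsets : ∀ n : ℕ, {ω : ℕ → ℕ | (n : ℝ≥0∞) < T0 ω}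
      = {ω : ℕ → ℕ | ∀ i, 1 ≤ i → i ≤ n → ω i ≠ 0} := by
    intro n; ext ω; exact T0_gt_iff ω n
  have hmeas : ∀ n : ℕ, MeasurableSet {ω : ℕ → ℕ | (n : ℝ≥0∞) < T0 ω} := by
    intro n; rw [hsets n]; exact surv_measurable n
  have hind : ∀ (n : ℕ) (ω : ℕ → ℕ), (if (n : ℝ≥0∞) < T0 ω then (1:ℝ≥0∞) else 0)
      = Set.indicator {ω : ℕ → ℕ | (n : ℝ≥0∞) < T0 ω} (fun _ => 1) ω := by
    intro n ω
    rw [Set.indicator_apply]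
    rfl
  calc ∫⁻ ω, (∑' n : ℕ, if (n : ℝ≥0∞) < T0 ω then 1 else 0) ∂(M.ℙ 0)
      = ∫⁻ ω, (∑' n : ℕ, Set.indicator {ω : ℕ → ℕ | (n : ℝ≥0∞) < T0 ω} (fun _ => 1) ω)
          ∂(M.ℙ 0) := by
        exact lintegral_congr fun ω => tsum_congr fun n => hind n ω
    _ = ∑' n : ℕ, ∫⁻ ω, Set.indicator {ω : ℕ → ℕ | (n : ℝ≥0∞) < T0 ω} (fun _ => 1) ω
          ∂(M.ℙ 0) := by
        refine lintegral_tsum fun n => ?_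
        exact ((measurable_const).indicator (hmeas n)).aemeasurable
    _ = ∑' n : ℕ, M.ℙ 0 {ω : ℕ → ℕ | (n : ℝ≥0∞) < T0 ω} := by
        refine tsum_congr fun n => ?_
        rw [lintegral_indicator (hmeas n)]
        simp
    _ = ∑' n : ℕ, sv M n 0 := by
        refine tsum_congr fun n => ?_
        rw [hsets n, meas_surv]

lemma exists_qpos (l : ℕ) (h : 0 < M.ℙ l {ω | T0 ω < ⊤}) : ∃ m, 0 < q M m l 0 := by
  by_contra hc
  push_neg at hc
  have hq0 : ∀ m : ℕ, M.ℙ l {ω | ω m = 0} = 0 := by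
    intro m
    rw [meas_coord]
    exact le_antisymm (hc m) zero_le
  have hsub : {ω : ℕ → ℕ | T0 ω < ⊤} ⊆ ⋃ i : ℕ, {ω : ℕ → ℕ | ω i = 0} ∩
      (if 0 < i then Set.univ else ∅) := by
    intro ω hω
    obtain ⟨i, hi0, hiz⟩ := (T0_lt_top_iff ω).1 hω
    exact Set.mem_iUnion.2 ⟨i, ⟨hiz, by simp [hi0]⟩⟩
  have : M.ℙ l {ω | T0 ω < ⊤} = 0 := by
    refine measure_mono_null hsub (measure_iUnion_null fun i => ?_)
    exact measure_mono_null (Set.inter_subset_left) (hq0 i)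
  rw [this] at h
  exact absurd h (lt_irrefl 0)

-- analysis stage, inside namespace StmtAux, variable (M : MCNat)

/-- the core analytic lemma: null recurrence forces `u_n → 0` -/
lemma U_tendsto (hp00 : M.p 0 0 ≠ 0) (htop : (∑' n, sv M n 0) = ⊤) :
    Tendsto (fun n => (q M n 0 0).toReal) atTop (nhds 0) := by
  classical
  set U : ℕ → ℝ := fun n => (q M n 0 0).toReal with hUdef
  set R : ℕ → ℝ := fun n => (sv M n 0).toReal with hRdef
  set F : ℕ → ℝ := fun j => (ar M j 0).toReal with hFdef
  have hU0 : ∀ n, 0 ≤ U n := fun n => ENNReal.toReal_nonneg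
  have hU1 : ∀ n, U n ≤ 1 := fun n => by
    simpa using ENNReal.toReal_mono one_ne_top (q_le_one M n 0 0)
  have hR0 : ∀ n, 0 ≤ R n := fun n => ENNReal.toReal_nonneg
  have hF0 : ∀ n, 0 ≤ F n := fun n => ENNReal.toReal_nonneg
  have hUbdd : IsBoundedUnder (· ≤ ·) atTop U := isBoundedUnder_of ⟨1, hU1⟩
  have hUbddge : IsBoundedUnder (· ≥ ·) atTop U := isBoundedUnder_of ⟨0, hU0⟩
  have hUcob : IsCoboundedUnder (· ≤ ·) atTop U := hUbddge.isCoboundedUnder_le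
  have hUcobge : IsCoboundedUnder (· ≥ ·) atTop U := hUbdd.isCoboundedUnder_ge
  -- real renewal equation
  have Ureal : ∀ n, U (n+1) = ∑ j ∈ Finset.range (n+1), F (j+1) * U (n-j) := by
    intro n
    have h := congrArg ENNReal.toReal (renewal M n 0)
    rw [ENNReal.toReal_sum
      (fun j _ => ENNReal.mul_ne_top (ar_ne_top M _ 0) (q_ne_top M _ 0 0))] at h
    simpa [ENNReal.toReal_mul] using h
  -- real last-visit identity
  have lastreal : ∀ n, ∑ m ∈ Finset.range (n+1), U m * R (n-m) = 1 := by
    intro n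
    have h := congrArg ENNReal.toReal (last_visit M n)
    rw [ENNReal.toReal_sum
      (fun m _ => ENNReal.mul_ne_top (q_ne_top M _ 0 0) (sv_ne_top M _ 0))] at h
    simpa [ENNReal.toReal_mul] using h
  -- partial sums of F are at most 1
  have partialF : ∀ J, ∑ j ∈ Finset.range J, F (j+1) ≤ 1 := by
    intro J
    have h := ENNReal.toReal_mono one_ne_top (sum_ar_le_one M J 0)
    rw [ENNReal.toReal_sum (fun j _ => ar_ne_top M _ 0)] at h
    simpa using h
  have hF1pos : 0 < F 1 := by
    have : F 1 = (M.p 0 0).toReal := by show (ar M 1 0).toReal = _; rw [ar_one]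
    rw [this]
    exact ENNReal.toReal_pos hp00 (p_ne_top M 0 0)
  have hF1le : F 1 ≤ 1 := by
    have := partialF 1
    simpa using this
  -- unbounded partial sums of R
  have hRunb : ∀ C : ℝ, 0 ≤ C → ∃ J, C < ∑ j ∈ Finset.range J, R j := by
    intro C hC
    rw [ENNReal.tsum_eq_iSup_nat] at htop
    obtain ⟨J, hJ⟩ := iSup_eq_top.1 htop (ENNReal.ofReal (C+1)) ENNReal.ofReal_lt_top
    refine ⟨J, ?_⟩
    have hne : (∑ j ∈ Finset.range J, sv M j 0) ≠ ⊤ :=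
      (ENNReal.sum_lt_top.2 fun j _ => (sv_ne_top M j 0).lt_top).ne
    have := (ENNReal.toReal_lt_toReal ENNReal.ofReal_lt_top.ne hne).2 hJ
    rw [ENNReal.toReal_ofReal (by linarith), ENNReal.toReal_sum (fun j _ => sv_ne_top M j 0)]
      at this
    calc C < C + 1 := by linarith
      _ < ∑ j ∈ Finset.range J, R j := this
  set L := limsup U atTop with hLdef
  have hL0 : 0 ≤ L := le_limsup_of_frequently_le
    (Frequently.of_forall fun n => hU0 n) hUbdd
  have hL1 : L ≤ 1 := limsup_le_of_le hUcob (Eventually.of_forall hU1)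
  have hnotpos : ¬ (0 < L) := by
    intro hL
    have claim : ∀ Mx : ℕ, (∑ j ∈ Finset.range (Mx+1), R j) ≤ 2 / L := by
      intro Mx
      set φ1 := F 1 with hφ1def
      -- iterated constants
      set D : ℕ → ℝ := fun j => Nat.rec 1 (fun _ d => (d + 2)/φ1) j with hDdef
      have hDzero : D 0 = 1 := rfl
      have hDsucc : ∀ j, D (j+1) = (D j + 2)/φ1 := fun j => rfl
      have hdivle : ∀ a : ℝ, 0 ≤ a → a ≤ a / φ1 := by
        intro a ha
        rw [le_div_iff₀ hF1pos]
        exact mul_le_of_le_one_right ha hF1le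
      have hD1 : ∀ j, 1 ≤ D j := by
        intro j
        induction j with
        | zero => simp [hDzero]
        | succ j ih =>
          rw [hDsucc]
          calc (1:ℝ) ≤ D j + 2 := by linarith
            _ ≤ (D j + 2)/φ1 := hdivle _ (by linarith)
      have hDmono : Monotone D := by
        refine monotone_nat_of_le_succ fun j => ?_
        rw [hDsucc]
        calc D j ≤ D j + 2 := by linarith
          _ ≤ (D j + 2)/φ1 := hdivle _ (by linarith [hD1 j])
      have hDMpos : 0 < D Mx := lt_of_lt_of_le one_pos (hD1 Mx)
      set ε : ℝ := L / (2 * D Mx) with hεdef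
      have hε : 0 < ε := div_pos hL (by positivity)
      have hDMε : D Mx * ε = L / 2 := by
        rw [hεdef]
        field_simp
      -- eventual upper bound
      obtain ⟨N₁, hN₁⟩ : ∃ N₁, ∀ n ≥ N₁, U n < L + ε :=
        eventually_atTop.1 (eventually_lt_of_limsup_lt (by linarith) hUbdd)
      -- tail bound for F, with K ≥ 1
      obtain ⟨K, hK1, hK⟩ : ∃ K, 1 ≤ K ∧
          ∀ m, ∑ j ∈ Finset.Ico K m, F (j+1) ≤ ε := by
        set S : ℕ → ℝ := fun J => ∑ j ∈ Finset.range J, F (j+1) with hSdef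
        have hbddS : BddAbove (Set.range S) := by
          refine ⟨1, ?_⟩
          rintro x ⟨J, rfl⟩
          exact partialF J
        have hlt : (⨆ J, S J) - ε < ⨆ J, S J := sub_lt_self _ hε
        obtain ⟨K₀, hK₀⟩ := exists_lt_of_lt_ciSup hlt
        refine ⟨K₀ + 1, by omega, fun m => ?_⟩
        have hmono : Monotone S := by
          refine monotone_nat_of_le_succ fun J => ?_
          rw [hSdef]
          simp only []
          rw [Finset.sum_range_succ]
          linarith [hF0 (J+1)]
        by_cases hm : K₀ + 1 ≤ m
        · rw [Finset.sum_Ico_eq_sub _ hm]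
          have hSm : S m ≤ ⨆ J, S J := le_ciSup hbddS m
          have hmono' : S K₀ ≤ S (K₀+1) := hmono (by omega)
          have : S K₀ ≤ ∑ j ∈ Finset.range (K₀+1), F (j+1) := hmono'
          simp only [hSdef] at hSm hK₀ ⊢
          linarith
        · rw [Finset.Ico_eq_empty (by omega)]
          simp [hε.le]
      -- pick a witness n
      obtain ⟨n, hnU, hnN⟩ : ∃ n, L - ε < U n ∧ N₁ + K + Mx + 2 ≤ n := by
        have hfreq := frequently_lt_of_lt_limsup hUcob (show L - ε < L by linarith)
        obtain ⟨n, h1, h2⟩ := (hfreq.and_eventually (eventually_ge_atTop (N₁ + K + Mx + 2))).exists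
        exact ⟨n, h1, h2⟩
      -- descent
      have hdesc : ∀ j, j ≤ Mx → L - D j * ε ≤ U (n - j) := by
        intro j
        induction j with
        | zero =>
          intro _
          have : L - D 0 * ε = L - ε := by rw [hDzero]; ring_nf
          rw [this]
          simpa using hnU.le
        | succ j ih =>
          intro hj
          have hUj := ih (by omega)
          have hm1 : n - j - 1 = n - (j+1) := by omega
          have hmN : N₁ + K + 1 ≤ n - j := by omega
          have hmpos : 1 ≤ n - j := by omega
          have hKm : K ≤ n - j := by omega
          -- renewal at n - j
          have hren : U (n-j) = ∑ i ∈ Finset.range (n-j), F (i+1) * U (n-j-1-i) := by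
            have h := Ureal (n-j-1)
            rw [show n - j - 1 + 1 = n - j from by omega] at h
            exact h
          have hsplit := Finset.sum_range_add_sum_Ico
            (fun i => F (i+1) * U (n-j-1-i)) hKm
          -- tail bound
          have htail : ∑ i ∈ Finset.Ico K (n-j), F (i+1) * U (n-j-1-i) ≤ ε := by
            refine le_trans (Finset.sum_le_sum fun i _ => ?_) (hK (n-j))
            exact mul_le_of_le_one_right (hF0 _) (hU1 _)
          -- head split
          have hhead : ∑ i ∈ Finset.range K, F (i+1) * U (n-j-1-i)
              = F 1 * U (n-j-1) + ∑ i ∈ Finset.Ico 1 K, F (i+1) * U (n-j-1-i) := by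
            rw [Finset.range_eq_Ico, Finset.sum_eq_sum_Ico_succ_bot (by omega)]
            try norm_num
          -- mid bound
          have hmid : ∑ i ∈ Finset.Ico 1 K, F (i+1) * U (n-j-1-i) ≤ (1 - φ1) * (L + ε) := by
            have hFsum : ∑ i ∈ Finset.Ico 1 K, F (i+1) ≤ 1 - φ1 := by
              have h1 : ∑ i ∈ Finset.range K, F (i+1)
                  = F 1 + ∑ i ∈ Finset.Ico 1 K, F (i+1) := by
                rw [Finset.range_eq_Ico, Finset.sum_eq_sum_Ico_succ_bot (by omega)]
                try norm_num
              have := partialF K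
              rw [h1] at this
              linarith
            calc ∑ i ∈ Finset.Ico 1 K, F (i+1) * U (n-j-1-i)
                ≤ ∑ i ∈ Finset.Ico 1 K, F (i+1) * (L + ε) := by
                  refine Finset.sum_le_sum fun i hi => ?_
                  obtain ⟨hi1, hi2⟩ := Finset.mem_Ico.1 hi
                  have : N₁ ≤ n - j - 1 - i := by omega
                  exact mul_le_mul_of_nonneg_left (hN₁ _ this).le (hF0 _)
              _ = (∑ i ∈ Finset.Ico 1 K, F (i+1)) * (L + ε) := by
                  rw [Finset.sum_mul]
              _ ≤ (1 - φ1) * (L + ε) :=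
                  mul_le_mul_of_nonneg_right hFsum (by linarith)
          -- combine
          have hcomb : U (n-j) ≤ φ1 * U (n-j-1) + (1 - φ1) * (L + ε) + ε := by
            rw [hren, ← hsplit, hhead]
            linarith
          -- conclude
          have hψ : φ1 * (D (j+1) * ε) = (D j + 2) * ε := by
            rw [hDsucc]
            field_simp
          have hineq : φ1 * (L - D (j+1) * ε) ≤ φ1 * U (n-j-1) := by
            have hexp : φ1 * (L - D (j+1) * ε) = φ1 * L - (D j + 2) * ε := by
              rw [mul_sub, hψ]
            rw [hexp]
            nlinarith [hUj, hcomb, hε.le, hF1pos.le]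
          have := le_of_mul_le_mul_left hineq hF1pos
          rw [hm1] at this
          exact this
      -- each of the last Mx+1 values is at least L/2
      have hhalf : ∀ j, j ≤ Mx → L / 2 ≤ U (n - j) := by
        intro j hj
        have h1 := hdesc j hj
        have h2 : D j * ε ≤ D Mx * ε := mul_le_mul_of_nonneg_right (hDmono hj) hε.le
        rw [hDMε] at h2
        linarith
      -- plug into the last-visit identity
      have hsubsum : ∑ j ∈ Finset.range (Mx+1), U (n-j) * R j ≤ 1 := by
        rw [← lastreal n]
        have hinj : ∀ x ∈ Finset.range (Mx+1), ∀ y ∈ Finset.range (Mx+1),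
            n - x = n - y → x = y := by
          intro x hx y hy h
          have hx' := Finset.mem_range.1 hx
          have hy' := Finset.mem_range.1 hy
          omega
        have himg := Finset.sum_image (f := fun m => U m * R (n - m))
          (g := fun j => n - j) (s := Finset.range (Mx+1)) hinj
        have hcongr : ∑ j ∈ Finset.range (Mx+1), U (n-j) * R (n-(n-j))
            = ∑ j ∈ Finset.range (Mx+1), U (n-j) * R j := by
          refine Finset.sum_congr rfl fun j hj => ?_
          have hj' := Finset.mem_range.1 hj
          have : n - (n - j) = j := by omega
          rw [this]
        rw [← hcongr, ← himg]
        refine Finset.sum_le_sum_of_subset_of_nonneg ?_ fun i _ _ =>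
          mul_nonneg (hU0 i) (hR0 _)
        intro m hm
        simp only [Finset.mem_image, Finset.mem_range] at hm ⊢
        obtain ⟨j, hj, rfl⟩ := hm
        omega
      have hlower : (L/2) * (∑ j ∈ Finset.range (Mx+1), R j)
          ≤ ∑ j ∈ Finset.range (Mx+1), U (n-j) * R j := by
        rw [Finset.mul_sum]
        refine Finset.sum_le_sum fun j hj => ?_
        exact mul_le_mul_of_nonneg_right (hhalf j (Nat.lt_succ_iff.1 (Finset.mem_range.1 hj)))
          (hR0 j)
      rw [le_div_iff₀ hL]
      nlinarith [hsubsum, hlower]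
    obtain ⟨J, hJ⟩ := hRunb (2 / L) (by positivity)
    have hJ2 : (∑ j ∈ Finset.range J, R j) ≤ ∑ j ∈ Finset.range (J+1), R j := by
      rw [Finset.sum_range_succ]
      linarith [hR0 J]
    have := claim J
    linarith
  have hlimsup : limsup U atTop = 0 := le_antisymm (not_lt.1 hnotpos) hL0
  have hliminf : liminf U atTop = 0 := by
    refine le_antisymm ?_ (le_liminf_of_le hUcobge (Eventually.of_forall hU0))
    calc liminf U atTop ≤ limsup U atTop := liminf_le_limsup hUbdd hUbddge
      _ = 0 := hlimsup
  exact tendsto_of_liminf_eq_limsup hliminf hlimsup hUbdd hUbddge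

lemma q00_tendsto (hp00 : M.p 0 0 ≠ 0) (htop : (∑' n, sv M n 0) = ⊤) :
    Tendsto (fun n => q M n 0 0) atTop (nhds 0) := by
  have h := U_tendsto M hp00 htop
  have h2 : Tendsto (fun n => ENNReal.ofReal ((q M n 0 0).toReal)) atTop
      (nhds (ENNReal.ofReal 0)) := (ENNReal.continuous_ofReal.tendsto 0).comp h
  rw [ENNReal.ofReal_zero] at h2
  exact h2.congr fun n => ENNReal.ofReal_toReal (q_ne_top M n 0 0)

lemma qk0_tendsto (hp00 : M.p 0 0 ≠ 0) (htop : (∑' n, sv M n 0) = ⊤) (k : ℕ) :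
    Tendsto (fun n => q M n k 0) atTop (nhds 0) := by
  have h00 := ENNReal.tendsto_atTop_zero.1 (q00_tendsto M hp00 htop)
  rw [ENNReal.tendsto_atTop_zero]
  intro ε hε
  set ε1 := min ε 1 with hε1def
  have hε1pos : 0 < ε1 := lt_min hε zero_lt_one
  have hhalfpos : 0 < ε1 / 2 := ENNReal.div_pos hε1pos.ne' ENNReal.ofNat_ne_top
  have htsum : (∑' j, ar M (j+1) k) ≠ ⊤ :=
    (lt_of_le_of_lt (tsum_ar_le_one M k) one_lt_top).ne
  have htail := ENNReal.tendsto_atTop_zero.1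
    (ENNReal.tendsto_sum_nat_add (fun j => ar M (j+1) k) htsum)
  obtain ⟨K, hK⟩ := htail (ε1/2) hhalfpos
  obtain ⟨N₂, hN₂⟩ := h00 (ε1/2) hhalfpos
  refine ⟨N₂ + K + 1, fun n hn => ?_⟩
  have hren := renewal M (n-1) k
  rw [show n - 1 + 1 = n from by omega] at hren
  have hTn : n - N₂ ≤ n := by omega
  have hTK : K ≤ n - N₂ := by omega
  have hhead : ∑ j ∈ Finset.range (n - N₂), ar M (j+1) k * q M (n-1-j) 0 0 ≤ ε1/2 := by
    calc ∑ j ∈ Finset.range (n - N₂), ar M (j+1) k * q M (n-1-j) 0 0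
        ≤ ∑ j ∈ Finset.range (n - N₂), ar M (j+1) k * (ε1/2) := by
          refine Finset.sum_le_sum fun j hj => ?_
          have hj' := Finset.mem_range.1 hj
          exact mul_le_mul_right (hN₂ (n-1-j) (by omega)) _
      _ = (∑ j ∈ Finset.range (n - N₂), ar M (j+1) k) * (ε1/2) := by
          rw [Finset.sum_mul]
      _ ≤ 1 * (ε1/2) := mul_le_mul_left (sum_ar_le_one M _ k) _
      _ = ε1/2 := one_mul _
  have htail2 : ∑ j ∈ Finset.Ico (n - N₂) n, ar M (j+1) k * q M (n-1-j) 0 0 ≤ ε1/2 := by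
    calc ∑ j ∈ Finset.Ico (n - N₂) n, ar M (j+1) k * q M (n-1-j) 0 0
        ≤ ∑ j ∈ Finset.Ico (n - N₂) n, ar M (j+1) k := by
          refine Finset.sum_le_sum fun j _ => ?_
          calc ar M (j+1) k * q M (n-1-j) 0 0 ≤ ar M (j+1) k * 1 :=
                mul_le_mul_right (q_le_one M _ 0 0) _
            _ = ar M (j+1) k := mul_one _
      _ = ∑ i ∈ Finset.range (n - (n - N₂)), ar M ((n - N₂) + i + 1) k := by
          rw [Finset.sum_Ico_eq_sum_range]
      _ = ∑ i ∈ Finset.range (n - (n - N₂)), ar M (i + (n - N₂) + 1) k := by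
          refine Finset.sum_congr rfl fun i _ => ?_
          rw [show (n - N₂) + i + 1 = i + (n - N₂) + 1 from by omega]
      _ ≤ ∑' i, ar M (i + (n - N₂) + 1) k :=
          Summable.sum_le_tsum _ (fun i _ => zero_le) ENNReal.summable
      _ ≤ ε1/2 := hK (n - N₂) hTK
  calc q M n k 0 = ∑ j ∈ Finset.range n, ar M (j+1) k * q M (n-1-j) 0 0 := hren
    _ = (∑ j ∈ Finset.range (n - N₂), ar M (j+1) k * q M (n-1-j) 0 0)
        + ∑ j ∈ Finset.Ico (n - N₂) n, ar M (j+1) k * q M (n-1-j) 0 0 :=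
        (Finset.sum_range_add_sum_Ico _ hTn).symm
    _ ≤ ε1/2 + ε1/2 := add_le_add hhead htail2
    _ = ε1 := ENNReal.add_halves _
    _ ≤ ε := min_le_left _ _

end StmtAux

/-- If `𝔼_0(T₀) = ∞` and `ℙ_l(T₀ < ∞) > 0` for every `l`, then for every initial state `k`
the chain tends to `∞` in probability: `ℙ_k(Z_n = l) → 0` for every `l`. -/
theorem stmt2 (M : MCNat)
    (h0 : 0 < M.ℙ 0 {ω | ω 1 = 0}) (h1 : M.ℙ 0 {ω | ω 1 = 0} < 1)
    (hT : ET0 M 0 = ⊤) (hret : ∀ l : ℕ, 0 < M.ℙ l {ω | T0 ω < ⊤}) :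
    ∀ k l : ℕ, Tendsto (fun n => M.ℙ k {ω | ω n = l}) atTop (nhds 0) := by
  intro k l
  have hp00 : M.p 0 0 ≠ 0 := by
    rw [StmtAux.meas_coord M 0 1 0, StmtAux.q_one] at h0
    exact h0.ne'
  have htop : (∑' n, StmtAux.sv M n 0) = ⊤ := by rw [← StmtAux.ET0_eq]; exact hT
  have hk0 := StmtAux.qk0_tendsto M hp00 htop k
  obtain ⟨m, hm⟩ := StmtAux.exists_qpos M l (hret l)
  have heq : (fun n => M.ℙ k {ω | ω n = l}) = fun n => StmtAux.q M n k l :=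
    funext fun n => StmtAux.meas_coord M k n l
  rw [heq, ENNReal.tendsto_atTop_zero]
  intro ε hε
  have hc0 : StmtAux.q M m l 0 ≠ 0 := hm.ne'
  have hctop : StmtAux.q M m l 0 ≠ ⊤ := StmtAux.q_ne_top M m l 0
  have hεc : 0 < ε * StmtAux.q M m l 0 := ENNReal.mul_pos hε.ne' hc0
  obtain ⟨N, hN⟩ := ENNReal.tendsto_atTop_zero.1 hk0 (ε * StmtAux.q M m l 0) hεc
  refine ⟨N, fun n hn => ?_⟩
  have hCK : StmtAux.q M n k l * StmtAux.q M m l 0 ≤ StmtAux.q M (n+m) k 0 := by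
    rw [StmtAux.CK M n m k 0]
    exact ENNReal.le_tsum l
  have hbound : StmtAux.q M (n+m) k 0 ≤ ε * StmtAux.q M m l 0 := hN (n+m) (by omega)
  exact (ENNReal.mul_le_mul_iff_left hc0 hctop).1 (hCK.trans hbound)


end
end
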